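/- arXiv:1803.09880 — 7 statements merged into one kernel-verified Lean document; each statement's English description precedes it below -/
import Mathlib

section
/- If every tournament on km+1 vertices contains a k-ary spanning tree, then every tournament on km vertices contains a k-ary spanning tree. -/
def IsTournament {V : Type*} (beats : V → V → Prop) : Prop :=
  (∀ v, ¬ beats v v) ∧ ∀ u v : V, u ≠ v → (beats u v ↔ ¬ beats v u)

def IsKAryTreeOn {V : Type*} [DecidableEq V] (beats : V → V → Prop) (k : ℕ)
    (S : Finset V) (root : V) (parent : V → V) : Prop :=
  root ∈ S ∧ (∀ v ∈ S, parent v ∈ S) ∧ parent root = root ∧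
  (∀ v ∈ S, v ≠ root → beats (parent v) v) ∧
  (∀ v ∈ S, ∃ n : ℕ, parent^[n] v = root) ∧
  ∃ e ∈ S, (S.filter (fun w => w ≠ root ∧ parent w = e)).card ≤ k ∧
    ∀ v ∈ S, v ≠ e →
      (S.filter (fun w => w ≠ root ∧ parent w = v)).card = k ∨
      (S.filter (fun w => w ≠ root ∧ parent w = v)).card = 0

def HasKArySpanningTree {V : Type*} [Fintype V] [DecidableEq V]
    (beats : V → V → Prop) (k : ℕ) : Prop :=
  ∃ (root : V) (parent : V → V), IsKAryTreeOn beats k Finset.univ root parent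

/-- If every tournament on `k*m+1` vertices has a `k`-ary spanning tree, then so
does every tournament on `k*m` vertices. -/
theorem stmt3 (k m : ℕ) (hk : 1 ≤ k) (hm : 1 ≤ m)
    (H : ∀ (W : Type) [Fintype W] [DecidableEq W], Fintype.card W = k * m + 1 →
      ∀ beats : W → W → Prop, IsTournament beats → HasKArySpanningTree beats k) :
    ∀ (W : Type) [Fintype W] [DecidableEq W], Fintype.card W = k * m →
      ∀ beats : W → W → Prop, IsTournament beats → HasKArySpanningTree beats k := by
  intro W _ _ hcard beats hT
  -- extend the tournament with a vertex `none` that loses to everyone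
  set beats' : Option W → Option W → Prop := fun x y =>
    match x, y with
    | some u, some v => beats u v
    | some _, none => True
    | none, _ => False
    with hbeats'def
  have hT' : IsTournament beats' := by
    constructor
    · rintro (_ | v) <;> simp [beats']
      exact hT.1 v
    · rintro (_ | u) (_ | v) h <;> simp [beats'] at *
      exact hT.2 u v (fun huv => h (by rw [huv]))
  have hcard' : Fintype.card (Option W) = k * m + 1 := by
    simp [Fintype.card_option, hcard]
  obtain ⟨root', parent', hroot'mem, hmaps, hfix, hbt, hreach, e, hemem, hecard, heoth⟩ :=
    H (Option W) hcard' beats' hT'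
  -- parent' maps `some` to `some`
  have hsome : ∀ v : W, ∃ u : W, parent' (some v) = some u := by
    intro v
    rcases h : parent' (some v) with _ | u
    · by_cases hv : (some v : Option W) = root'
      · rw [hv, hfix] at h
        rw [← hv] at h
        exact absurd h.symm (by simp)
      · have := hbt (some v) (Finset.mem_univ _) hv
        rw [h] at this
        simp [beats'] at this
    · exact ⟨u, rfl⟩
  set parent : W → W := fun v => (hsome v).choose with hparentdef
  have hps : ∀ v : W, parent' (some v) = some (parent v) := fun v => (hsome v).choose_spec
  have hit : ∀ (n : ℕ) (v : W), parent'^[n] (some v) = some (parent^[n] v) := by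
    intro n
    induction n with
    | zero => simp
    | succ n ih =>
      intro v
      rw [Function.iterate_succ_apply, Function.iterate_succ_apply, hps, ih]
  -- the root is a `some`
  have : Nonempty W := by
    rw [← Fintype.card_pos_iff, hcard]; positivity
  obtain ⟨v0⟩ := this
  obtain ⟨n0, hn0⟩ := hreach (some v0) (Finset.mem_univ _)
  set r : W := parent^[n0] v0 with hrdef
  have hroot' : root' = some r := by rw [← hn0, hit]
  -- parent of `none`
  have hnone : ∃ p : W, parent' none = some p := by
    rcases h : parent' none with _ | p
    · have := hbt none (Finset.mem_univ _) (by rw [hroot']; simp)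
      rw [h] at this
      simp [beats'] at this
    · exact ⟨p, rfl⟩
  obtain ⟨p, hp⟩ := hnone
  -- children count function on Option W
  set F : Option W → ℕ :=
    fun x => (Finset.univ.filter (fun w => w ≠ root' ∧ parent' w = x)).card with hFdef
  have hsum : ∑ x : Option W, F x = k * m := by
    have h1 := Finset.card_eq_sum_card_fiberwise
      (s := Finset.univ.filter (· ≠ root')) (t := Finset.univ) (f := parent')
      (fun x _ => Finset.mem_univ _)
    have h2 : (Finset.univ.filter (· ≠ root')).card = k * m := by
      rw [Finset.filter_ne', Finset.card_erase_of_mem (Finset.mem_univ _), Finset.card_univ,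
        hcard']
      simp
    rw [h2] at h1
    rw [h1]
    apply Finset.sum_congr rfl
    intro x _
    simp only [hFdef]
    congr 1
    rw [Finset.filter_filter]
  have hecard' : F e ≤ k := hecard
  have heoth' : ∀ x : Option W, x ≠ e → F x = k ∨ F x = 0 :=
    fun x hx => heoth x (Finset.mem_univ x) hx
  have hall : ∀ x : Option W, F x = k ∨ F x = 0 := by
    have hdvd : k ∣ F e := by
      have h3 : F e + ∑ x ∈ Finset.univ.erase e, F x = k * m := by
        rw [Finset.add_sum_erase _ _ (Finset.mem_univ e), hsum]
      have h4 : k ∣ ∑ x ∈ Finset.univ.erase e, F x := by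
        apply Finset.dvd_sum
        intro x hx
        rcases heoth' x (Finset.ne_of_mem_erase hx) with h | h
        · rw [h]
        · rw [h]; exact dvd_zero k
      have h5 : k ∣ k * m := ⟨m, rfl⟩
      rw [← h3] at h5
      exact (Nat.dvd_add_right h4).mp (by rwa [Nat.add_comm] at h5)
    intro x
    by_cases hx : x = e
    · subst hx
      obtain ⟨c, hc⟩ := hdvd
      rcases Nat.eq_zero_or_pos c with h | h
      · right; rw [hc, h, Nat.mul_zero]
      · left
        have h6 : k ≤ F x := by rw [hc]; exact Nat.le_mul_of_pos_right k h
        omega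
    · exact heoth' x hx
  -- relate counts on W and Option W
  have key : ∀ v : W, F (some v) =
      (Finset.univ.filter (fun w : W => w ≠ r ∧ parent w = v)).card +
        (if parent' none = some v then 1 else 0) := by
    intro v
    simp only [hFdef]
    have huniv : (Finset.univ : Finset (Option W)) =
        insert none (Finset.univ.map Function.Embedding.some) := by
      ext x; cases x <;> simp
    rw [huniv, Finset.filter_insert]
    have hmap : ((Finset.univ.map Function.Embedding.some).filter
        (fun w => w ≠ root' ∧ parent' w = some v)) =
        (Finset.univ.filter (fun w : W => w ≠ r ∧ parent w = v)).map
          Function.Embedding.some := by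
      rw [Finset.filter_map]
      congr 1
      apply Finset.filter_congr
      intro w _
      simp only [Function.comp, Function.Embedding.some_apply, hroot', hps]
      constructor
      · rintro ⟨h1, h2⟩
        exact ⟨fun h => h1 (by rw [h]), Option.some_injective _ h2⟩
      · rintro ⟨h1, h2⟩
        exact ⟨fun h => h1 (Option.some_injective _ h), by rw [h2]⟩
    have hnr : (none : Option W) ≠ root' := by rw [hroot']; simp
    by_cases hc : parent' none = some v
    · rw [if_pos (⟨hnr, hc⟩ : (none : Option W) ≠ root' ∧ parent' none = some v), if_pos hc]
      rw [Finset.card_insert_of_notMem (by simp [hmap]), hmap, Finset.card_map]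
    · rw [if_neg (by rintro ⟨-, h2⟩; exact hc h2), if_neg hc]
      rw [hmap, Finset.card_map, Nat.add_zero]
  -- build the spanning tree on W
  refine ⟨r, parent, Finset.mem_univ _, fun v _ => Finset.mem_univ _, ?_, ?_, ?_, p,
    Finset.mem_univ _, ?_, ?_⟩
  · have : parent' (some r) = some r := by rw [← hroot', hfix]
    rw [hps] at this
    exact Option.some_injective _ this
  · intro v _ hv
    have hvne : (some v : Option W) ≠ root' := by
      rw [hroot']; exact fun h => hv (Option.some_injective _ h)
    have := hbt (some v) (Finset.mem_univ _) hvne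
    rw [hps] at this
    exact this
  · intro v _
    obtain ⟨n, hn⟩ := hreach (some v) (Finset.mem_univ _)
    rw [hit, hroot'] at hn
    exact ⟨n, Option.some_injective _ hn⟩
  · have hFp := key p
    rw [if_pos hp] at hFp
    rcases hall (some p) with h | h
    · omega
    · omega
  · intro v _ hv
    have hFv := key v
    rw [if_neg (fun h => hv (Option.some_injective _ (hp.symm.trans h)).symm)] at hFv
    rcases hall (some v) with h | h
    · left; omega
    · right; omega
end

section
/- Let T be a tournament on n ≥ 2k+1 vertices, and let T_{≥k} be the set of vertices of out-degree at least k. If for every two distinct vertices u, v in T_{≥k} we have |(N⁺(u) ∪ N⁺(v)) \ {u,v}| ≤ 2k-2, then T contains no k-ary spanning tree. -/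
/-- Observation: if `n ≥ 2k+1` and any two distinct vertices of out-degree `≥ k`
have `|(N⁺(u) ∪ N⁺(v)) \ {u,v}| ≤ 2k-2`, then there is no `k`-ary spanning tree. -/
theorem stmt4 {V : Type*} [Fintype V] [DecidableEq V]
    (beats : V → V → Prop) (hT : IsTournament beats) (k : ℕ) (hk : 1 ≤ k)
    (hn : 2 * k + 1 ≤ Fintype.card V)
    (hcond : ∀ u v : V, u ≠ v → k ≤ {w | beats u w}.ncard →
      k ≤ {w | beats v w}.ncard →
      (({w | beats u w} ∪ {w | beats v w}) \ {u, v}).ncard ≤ 2 * k - 2) :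
    ¬ HasKArySpanningTree beats k := by
  classical
  rintro ⟨root, parent, hroot, hpar, hproot, hbeats, hreach, e, he, hecard, hreg⟩
  set C : V → Finset V := fun v =>
    Finset.univ.filter (fun w => w ≠ root ∧ parent w = v) with hC
  have hecard' : (C e).card ≤ k := hecard
  have hreg' : ∀ b, b ≠ e → (C b).card = k ∨ (C b).card = 0 :=
    fun b hb => hreg b (Finset.mem_univ b) hb
  -- upper bound on number of children
  have hCle : ∀ v, (C v).card ≤ k := by
    intro v
    by_cases hv : v = e
    · subst hv; exact hecard'
    · rcases hreg' v hv with h | h <;> omega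
  -- a vertex is never its own child
  have hnotself : ∀ v, v ∉ C v := by
    intro v hv
    simp only [hC, Finset.mem_filter] at hv
    have h := hbeats v (Finset.mem_univ v) hv.2.1
    rw [hv.2.2] at h
    exact hT.1 v h
  -- children sets are pairwise disjoint
  have hdisj : ∀ u v : V, u ≠ v → Disjoint (C u) (C v) := by
    intro u v huv
    rw [Finset.disjoint_left]
    intro w hwu hwv
    simp only [hC, Finset.mem_filter] at hwu hwv
    exact huv (hwu.2.2 ▸ hwv.2.2)
  -- sum of children counts
  have hsum : ∑ b : V, (C b).card
      = (Finset.univ.filter (fun w : V => w ≠ root)).card := by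
    rw [Finset.card_eq_sum_card_fiberwise
      (f := parent) (t := Finset.univ) (fun x _ => Finset.mem_univ _)]
    apply Finset.sum_congr rfl
    intro b _
    congr 1
    ext w
    simp [hC, and_comm]
  have hfilcard : 2 * k ≤ (Finset.univ.filter (fun w : V => w ≠ root)).card := by
    have : (Finset.univ.filter (fun w : V => w ≠ root)) = Finset.univ.erase root := by
      ext w; simp [Finset.mem_erase]
    rw [this, Finset.card_erase_of_mem (Finset.mem_univ _), Finset.card_univ]
    omega
  -- there are two distinct vertices with ≥ k children
  set A : Finset V := Finset.univ.filter (fun b => k ≤ (C b).card) with hA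
  have hAcard : 1 < A.card := by
    by_contra hle
    push_neg at hle
    have h1 : ∑ b ∈ A, (C b).card ≤ A.card * k :=
      Finset.sum_le_card_nsmul _ _ _ (fun x _ => hCle x)
    have h2 : ∑ b ∈ Finset.univ.filter (fun b => ¬ k ≤ (C b).card), (C b).card
        ≤ k - 1 := by
      calc ∑ b ∈ Finset.univ.filter (fun b => ¬ k ≤ (C b).card), (C b).card
          ≤ ∑ b ∈ Finset.univ.filter (fun b => ¬ k ≤ (C b).card),
              (if b = e then k - 1 else 0) := by
            apply Finset.sum_le_sum
            intro b hb
            simp only [Finset.mem_filter] at hb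
            by_cases hbe : b = e
            · subst hbe
              have hle1 : (C b).card ≤ k - 1 := by omega
              simpa using hle1
            · rcases hreg' b hbe with h | h
              · omega
              · simp [hbe, h]
        _ ≤ ∑ b : V, (if b = e then k - 1 else 0) :=
            Finset.sum_le_sum_of_subset (Finset.filter_subset _ _)
        _ = k - 1 := by simp
    have hsplit := Finset.sum_filter_add_sum_filter_not Finset.univ
      (fun b => k ≤ (C b).card) (fun b => (C b).card)
    rw [← hA] at hsplit
    have h1' : ∑ b ∈ A, (C b).card ≤ k := by
      calc ∑ b ∈ A, (C b).card ≤ A.card * k := h1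
        _ ≤ 1 * k := Nat.mul_le_mul_right k hle
        _ = k := one_mul k
    omega
  obtain ⟨u, v, hu, hv, huv⟩ := Finset.one_lt_card_iff.mp hAcard
  simp only [hA, Finset.mem_filter] at hu hv
  have hku : k ≤ (C u).card := hu.2
  have hkv : k ≤ (C v).card := hv.2
  -- children are out-neighbors
  have hsubN : ∀ x : V, ((C x : Finset V) : Set V) ⊆ {w | beats x w} := by
    intro x w hw
    simp only [Finset.coe_filter, hC, Set.mem_setOf_eq, Finset.mem_univ,
      true_and] at hw
    have h := hbeats w (Finset.mem_univ w) hw.1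
    rw [hw.2] at h
    exact h
  have hdeg : ∀ x : V, k ≤ (C x).card → k ≤ {w | beats x w}.ncard := by
    intro x hx
    calc k ≤ (C x).card := hx
      _ = ((C x : Finset V) : Set V).ncard := (Set.ncard_coe_finset _).symm
      _ ≤ {w | beats x w}.ncard :=
          Set.ncard_le_ncard (hsubN x) (Set.toFinite _)
  have hle2 := hcond u v huv (hdeg u hku) (hdeg v hkv)
  -- lower bound
  set D : Finset V := (C u ∪ C v) \ ({u, v} : Finset V) with hD
  have hDsub : ((D : Finset V) : Set V)
      ⊆ (({w | beats u w} ∪ {w | beats v w}) \ {u, v}) := by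
    intro w hw
    simp only [hD, Finset.coe_sdiff, Set.mem_diff, Finset.coe_union,
      Set.mem_union, Finset.mem_coe, Finset.coe_insert, Finset.coe_singleton,
      Set.mem_insert_iff, Set.mem_singleton_iff] at hw
    constructor
    · rcases hw.1 with h | h
      · exact Or.inl (hsubN u h)
      · exact Or.inr (hsubN v h)
    · simpa using hw.2
  have hDle : D.card ≤ 2 * k - 2 := by
    calc D.card = ((D : Finset V) : Set V).ncard := (Set.ncard_coe_finset _).symm
      _ ≤ _ := Set.ncard_le_ncard hDsub (Set.toFinite _)
      _ ≤ 2 * k - 2 := hle2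
  have hUcard : 2 * k ≤ (C u ∪ C v).card := by
    rw [Finset.card_union_of_disjoint (hdisj u v huv)]
    omega
  by_cases h1 : u ∈ C v
  · by_cases h2 : v ∈ C u
    · -- mutual parenthood: contradicts reachability of root
      simp only [hC, Finset.mem_filter] at h1 h2
      obtain ⟨n, hn⟩ := hreach u (Finset.mem_univ u)
      have key : ∀ m : ℕ, parent^[m] u = u ∨ parent^[m] u = v := by
        intro m
        induction m with
        | zero => exact Or.inl rfl
        | succ m ih =>
          rw [Function.iterate_succ_apply']
          rcases ih with h | h <;> rw [h]
          · exact Or.inr h1.2.2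
          · exact Or.inl h2.2.2
      rcases key n with h | h <;> rw [hn] at h
      · exact h1.2.1 h.symm
      · exact h2.2.1 h.symm
    ·
      -- v ∉ C u and v ∉ C v, so v ∉ union; D = union \ {u,v} = (union.erase u)
      have hvnot : v ∉ C u ∪ C v := by
        simp only [Finset.mem_union]
        rintro (h | h)
        · exact h2 h
        · exact hnotself v h
      have : 2 * k - 1 ≤ D.card := by
        have hEq : D = (C u ∪ C v).erase u := by
          rw [hD]
          ext w
          simp only [Finset.mem_sdiff, Finset.mem_insert, Finset.mem_singleton,
            Finset.mem_erase]
          constructor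
          · rintro ⟨hw, hw2⟩; exact ⟨fun h => hw2 (Or.inl h), hw⟩
          · rintro ⟨hw1, hw⟩
            refine ⟨hw, ?_⟩
            rintro (h | h)
            · exact hw1 h
            · exact hvnot (h ▸ hw)
        rw [hEq]
        have := Finset.pred_card_le_card_erase (s := C u ∪ C v) (a := u)
        omega
      omega
  · have hunot : u ∉ C u ∪ C v := by
      simp only [Finset.mem_union]
      rintro (h | h)
      · exact hnotself u h
      · exact h1 h
    have : 2 * k - 1 ≤ D.card := by
      have hEq : D = (C u ∪ C v).erase v := by
        rw [hD]
        ext w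
        simp only [Finset.mem_sdiff, Finset.mem_insert, Finset.mem_singleton,
          Finset.mem_erase]
        constructor
        · rintro ⟨hw, hw2⟩; exact ⟨fun h => hw2 (Or.inr h), hw⟩
        · rintro ⟨hw1, hw⟩
          refine ⟨hw, ?_⟩
          rintro (h | h)
          · exact hunot (h ▸ hw)
          · exact hw1 h
      rw [hEq]
      have := Finset.pred_card_le_card_erase (s := C u ∪ C v) (a := v)
      omega
    omega
end

section
/- Let T_9 be the tournament on vertex set {0,1,...,8} with arcs i → j whenever i - j ≡ 1, 2, 3, or 5 (mod 9). Then T_9 contains no 4-ary spanning tree; consequently h(4) ≥ 10. -/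
/-- The tournament `T₉` on `{0,…,8}` with `i → j` iff `i - j ≡ 1,2,3,5 (mod 9)`. -/
def T9 (i j : ZMod 9) : Prop := i - j = 1 ∨ i - j = 2 ∨ i - j = 3 ∨ i - j = 5

instance : DecidableRel T9 := fun i j => by unfold T9; infer_instance

lemma T9_irrefl : ∀ v : ZMod 9, ¬ T9 v v := by decide

lemma T9_tournament : IsTournament T9 :=
  ⟨T9_irrefl, by decide⟩

lemma T9_outdeg : ∀ i : ZMod 9, (Finset.univ.filter (fun j => T9 i j)).card = 4 := by
  decide

lemma T9_common : ∀ i j : ZMod 9, T9 i j → ∃ w, T9 i w ∧ T9 j w := by decide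

/-- Counting lemma: if `g` sums to 8 over a finite type, all values are ≤ 4,
`g root ≥ 1`, and all values except possibly at `e` are 0 or 4, then
`g root = 4` and there is exactly one other vertex with value 4; the rest are 0. -/
lemma aux_count {α : Type*} [Fintype α] [DecidableEq α] (g : α → ℕ) (root e : α)
    (hsum : ∑ v, g v = 8) (hle : ∀ v, g v ≤ 4) (hroot : 1 ≤ g root)
    (he4 : ∀ v, v ≠ e → g v = 4 ∨ g v = 0) :
    g root = 4 ∧ ∃ x, x ≠ root ∧ g x = 4 ∧ ∀ v, v ≠ root → v ≠ x → g v = 0 := by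
  classical
  by_cases hre : root = e
  · -- root = e
    subst hre
    set t := Finset.univ.erase root with ht
    have hsplit : g root + ∑ v ∈ t, g v = 8 := by
      rw [Finset.add_sum_erase _ g (Finset.mem_univ root)]; exact hsum
    have hfilt : ∑ v ∈ t.filter (fun v => g v = 4), g v = ∑ v ∈ t, g v :=
      Finset.sum_filter_of_ne (fun v hv hne =>
        (he4 v (Finset.ne_of_mem_erase hv)).resolve_right hne)
    have hconst : ∑ v ∈ t.filter (fun v => g v = 4), g v
        = (t.filter (fun v => g v = 4)).card * 4 :=
      Finset.sum_const_nat (fun v hv => (Finset.mem_filter.1 hv).2)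
    have hM : g root + (t.filter (fun v => g v = 4)).card * 4 = 8 := by
      rw [← hconst, hfilt]; exact hsplit
    have hgr := hle root
    have hcard1 : (t.filter (fun v => g v = 4)).card = 1 := by omega
    obtain ⟨x, hx⟩ := Finset.card_eq_one.1 hcard1
    have hxmem : x ∈ t.filter (fun v => g v = 4) := hx ▸ Finset.mem_singleton_self x
    have hx4 : g x = 4 := (Finset.mem_filter.1 hxmem).2
    have hxne : x ≠ root := Finset.ne_of_mem_erase (Finset.mem_filter.1 hxmem).1
    refine ⟨by omega, x, hxne, hx4, fun v hv hvx => ?_⟩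
    rcases he4 v hv with h4 | h0
    · exfalso
      have : v ∈ t.filter (fun v => g v = 4) :=
        Finset.mem_filter.2 ⟨Finset.mem_erase.2 ⟨hv, Finset.mem_univ v⟩, h4⟩
      rw [hx, Finset.mem_singleton] at this
      exact hvx this
    · exact h0
  · -- root ≠ e
    have hgr4 : g root = 4 := by
      rcases he4 root (fun h => hre h) with h | h
      · exact h
      · omega
    set t := (Finset.univ.erase root).erase e with ht
    have hein : e ∈ Finset.univ.erase root :=
      Finset.mem_erase.2 ⟨fun h => hre h.symm, Finset.mem_univ e⟩
    have hsplit : g root + (g e + ∑ v ∈ t, g v) = 8 := by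
      rw [Finset.add_sum_erase _ g hein, Finset.add_sum_erase _ g (Finset.mem_univ root)]
      exact hsum
    have hfilt : ∑ v ∈ t.filter (fun v => g v = 4), g v = ∑ v ∈ t, g v :=
      Finset.sum_filter_of_ne (fun v hv hne =>
        (he4 v (Finset.ne_of_mem_erase hv)).resolve_right hne)
    have hconst : ∑ v ∈ t.filter (fun v => g v = 4), g v
        = (t.filter (fun v => g v = 4)).card * 4 :=
      Finset.sum_const_nat (fun v hv => (Finset.mem_filter.1 hv).2)
    have hM : g root + (g e + (t.filter (fun v => g v = 4)).card * 4) = 8 := by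
      rw [← hconst, hfilt]; exact hsplit
    have hge := hle e
    have hM01 : (t.filter (fun v => g v = 4)).card = 0 ∨
        (t.filter (fun v => g v = 4)).card = 1 := by omega
    rcases hM01 with hM0 | hM1
    · -- x = e
      have hge4 : g e = 4 := by omega
      refine ⟨hgr4, e, fun h => hre h.symm, hge4, fun v hv hve => ?_⟩
      rcases he4 v hve with h4 | h0
      · exfalso
        have hvt : v ∈ t.filter (fun v => g v = 4) :=
          Finset.mem_filter.2 ⟨Finset.mem_erase.2 ⟨hve,
            Finset.mem_erase.2 ⟨hv, Finset.mem_univ v⟩⟩, h4⟩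
        have := Finset.card_pos.2 ⟨v, hvt⟩
        omega
      · exact h0
    · obtain ⟨x, hx⟩ := Finset.card_eq_one.1 hM1
      have hge0 : g e = 0 := by omega
      have hxmem : x ∈ t.filter (fun v => g v = 4) := hx ▸ Finset.mem_singleton_self x
      have hx4 : g x = 4 := (Finset.mem_filter.1 hxmem).2
      have hxt : x ∈ t := (Finset.mem_filter.1 hxmem).1
      have hxne : x ≠ root := Finset.ne_of_mem_erase (Finset.mem_of_mem_erase hxt)
      refine ⟨hgr4, x, hxne, hx4, fun v hv hvx => ?_⟩
      by_cases hve : v = e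
      · rw [hve]; exact hge0
      rcases he4 v hve with h4 | h0
      · exfalso
        have : v ∈ t.filter (fun v => g v = 4) :=
          Finset.mem_filter.2 ⟨Finset.mem_erase.2 ⟨hve,
            Finset.mem_erase.2 ⟨hv, Finset.mem_univ v⟩⟩, h4⟩
        rw [hx, Finset.mem_singleton] at this
        exact hvx this
      · exact h0

lemma T9_no_tree : ¬ HasKArySpanningTree T9 4 := by
  rintro ⟨root, parent, -, -, -, hbeats, hreach, e, -, he_le, he⟩
  -- the fibers over parent partition the non-root vertices
  have hsum : ∑ v : ZMod 9,
      (Finset.univ.filter (fun w => w ≠ root ∧ parent w = v)).card = 8 := by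
    have H := Finset.card_eq_sum_card_fiberwise
      (f := parent) (s := Finset.univ.filter (fun w => w ≠ root)) (t := Finset.univ)
      (fun x _ => Finset.mem_univ _)
    simp only [Finset.filter_filter] at H
    rw [Finset.filter_ne', Finset.card_erase_of_mem (Finset.mem_univ root),
      Finset.card_univ, ZMod.card] at H
    exact H.symm
  -- each fiber is contained in an out-neighborhood
  have hsub : ∀ v : ZMod 9,
      Finset.univ.filter (fun w => w ≠ root ∧ parent w = v)
        ⊆ Finset.univ.filter (fun w => T9 v w) := by
    intro v w hw
    simp only [Finset.mem_filter, Finset.mem_univ, true_and] at hw ⊢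
    obtain ⟨h1, h2⟩ := hw
    have := hbeats w (Finset.mem_univ w) h1
    rwa [h2] at this
  have hle : ∀ v : ZMod 9,
      (Finset.univ.filter (fun w => w ≠ root ∧ parent w = v)).card ≤ 4 := fun v =>
    le_trans (Finset.card_le_card (hsub v)) (le_of_eq (T9_outdeg v))
  -- the root has a child
  have hchild : ∃ c : ZMod 9, c ≠ root ∧ parent c = root := by
    have key : ∀ n (w : ZMod 9), parent^[n] w = root → w ≠ root →
        ∃ c, c ≠ root ∧ parent c = root := by
      intro n
      induction n with
      | zero => intro w h hw; exact absurd h hw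
      | succ n ih =>
        intro w h hw
        rw [Function.iterate_succ_apply] at h
        by_cases hpw : parent w = root
        · exact ⟨w, hw, hpw⟩
        · exact ih (parent w) h hpw
    have hex : ∃ w : ZMod 9, w ≠ root := by
      by_contra hc
      push_neg at hc
      have h1 : Fintype.card (ZMod 9) ≤ 1 :=
        Fintype.card_le_one_iff.2 (fun a b => (hc a).trans (hc b).symm)
      rw [ZMod.card] at h1
      omega
    obtain ⟨w, hw⟩ := hex
    obtain ⟨n, hn⟩ := hreach w (Finset.mem_univ w)
    exact key n w hn hw
  obtain ⟨c, hc1, hc2⟩ := hchild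
  have hroot1 : 1 ≤ (Finset.univ.filter (fun w => w ≠ root ∧ parent w = root)).card :=
    Finset.card_pos.2 ⟨c, Finset.mem_filter.2 ⟨Finset.mem_univ c, hc1, hc2⟩⟩
  have he4 : ∀ v : ZMod 9, v ≠ e →
      (Finset.univ.filter (fun w => w ≠ root ∧ parent w = v)).card = 4 ∨
      (Finset.univ.filter (fun w => w ≠ root ∧ parent w = v)).card = 0 :=
    fun v hv => he v (Finset.mem_univ v) hv
  obtain ⟨hgr4, x, hxne, hx4, hzero⟩ := aux_count
    (fun v => (Finset.univ.filter (fun w => w ≠ root ∧ parent w = v)).card)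
    root e hsum hle hroot1 he4
  -- the second heavy vertex x is a child of the root
  have hpx_ne : parent x ≠ x := by
    intro hpp
    have := hbeats x (Finset.mem_univ x) hxne
    rw [hpp] at this
    exact T9_irrefl x this
  have hgx : 1 ≤ (Finset.univ.filter (fun w => w ≠ root ∧ parent w = parent x)).card :=
    Finset.card_pos.2 ⟨x, Finset.mem_filter.2 ⟨Finset.mem_univ x, hxne, rfl⟩⟩
  have hpx : parent x = root := by
    by_contra hne
    have h0 := hzero (parent x) hne hpx_ne
    omega
  -- the fibers of root and x equal their full out-neighborhoods
  have heq_root : Finset.univ.filter (fun w => w ≠ root ∧ parent w = root)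
      = Finset.univ.filter (fun w => T9 root w) :=
    Finset.eq_of_subset_of_card_le (hsub root) (by rw [T9_outdeg]; exact le_of_eq hgr4.symm)
  have heq_x : Finset.univ.filter (fun w => w ≠ root ∧ parent w = x)
      = Finset.univ.filter (fun w => T9 x w) :=
    Finset.eq_of_subset_of_card_le (hsub x) (by rw [T9_outdeg]; exact le_of_eq hx4.symm)
  -- root beats x, so they have a common out-neighbor
  have hrx : T9 root x := by
    have := hbeats x (Finset.mem_univ x) hxne
    rwa [hpx] at this
  obtain ⟨w, hw1, hw2⟩ := T9_common root x hrx
  have hwr : w ∈ Finset.univ.filter (fun w => w ≠ root ∧ parent w = root) := by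
    rw [heq_root]
    exact Finset.mem_filter.2 ⟨Finset.mem_univ w, hw1⟩
  have hwx : w ∈ Finset.univ.filter (fun w => w ≠ root ∧ parent w = x) := by
    rw [heq_x]
    exact Finset.mem_filter.2 ⟨Finset.mem_univ w, hw2⟩
  have h1 := (Finset.mem_filter.1 hwr).2.2
  have h2 := (Finset.mem_filter.1 hwx).2.2
  exact hxne (h1.symm.trans h2).symm

/-- `T₉` has no 4-ary spanning tree; consequently `h(4) ≥ 10`, i.e. it is not the
case that every tournament of order at least 9 has a 4-ary spanning tree. -/
theorem stmt8 :
    ¬ HasKArySpanningTree T9 4 ∧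
    ¬ (∀ (W : Type) [Fintype W] [DecidableEq W], 9 ≤ Fintype.card W →
        ∀ beats : W → W → Prop, IsTournament beats →
          HasKArySpanningTree beats 4) := by
  refine ⟨T9_no_tree, fun h => T9_no_tree ?_⟩
  exact h (ZMod 9) (le_of_eq (ZMod.card 9).symm) T9 T9_tournament
end

section
/- Every tournament on 10 vertices contains a 4-ary spanning tree. -/
open Finset

theorem lemA {V : Type*} [Fintype V] [DecidableEq V] {beats : V → V → Prop}
    (r h e x : V) (C G : Finset V)
    (hCcard : C.card = 3) (hGcard : G.card = 4)
    (hCG : Disjoint C G)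
    (hrC : r ∉ C) (hrG : r ∉ G) (hhC : h ∉ C) (hhG : h ∉ G) (hxC : x ∉ C) (hxG : x ∉ G)
    (hrh : r ≠ h) (hrx : r ≠ x) (hhx : h ≠ x)
    (huniv : insert r (insert h (insert x (C ∪ G))) = Finset.univ)
    (he : e ∈ C ∪ G)
    (brh : beats r h) (brC : ∀ c ∈ C, beats r c) (bhG : ∀ g ∈ G, beats h g)
    (bex : beats e x) :
    HasKArySpanningTree beats 4 := by
  have her : e ≠ r := by
    rintro rfl
    rcases mem_union.1 he with h' | h'
    · exact hrC h'
    · exact hrG h'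
  have heh : e ≠ h := by
    rintro rfl
    rcases mem_union.1 he with h' | h'
    · exact hhC h'
    · exact hhG h'
  have hex2 : e ≠ x := by
    rintro rfl
    rcases mem_union.1 he with h' | h'
    · exact hxC h'
    · exact hxG h'
  set parent : V → V := fun v => if v = x then e else if v ∈ G then h else r with hpar
  have pdef : ∀ v, parent v = if v = x then e else if v ∈ G then h else r := fun v => rfl
  have px : parent x = e := by rw [pdef, if_pos rfl]
  have pG : ∀ v ∈ G, v ≠ x → parent v = h := by
    intro v hv hvx; rw [pdef, if_neg hvx, if_pos hv]
  have pelse : ∀ v, v ≠ x → v ∉ G → parent v = r := by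
    intro v hvx hvG; rw [pdef, if_neg hvx, if_neg hvG]
  have pr : parent r = r := pelse r hrx hrG
  have ph : parent h = r := pelse h hhx hhG
  have pC : ∀ v ∈ C, parent v = r := fun v hv =>
    pelse v (fun hh => hxC (hh ▸ hv)) (fun hh => (disjoint_left.1 hCG hv) hh)
  -- membership characterization
  have hmem : ∀ v : V, v = r ∨ v = h ∨ v = x ∨ v ∈ C ∨ v ∈ G := by
    intro v
    have : v ∈ insert r (insert h (insert x (C ∪ G))) := huniv ▸ mem_univ v
    simpa [mem_insert, mem_union] using this
  -- children sets
  have chr : Finset.univ.filter (fun w => w ≠ r ∧ parent w = r) = insert h C := by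
    ext w
    simp only [mem_filter, mem_univ, true_and, mem_insert]
    constructor
    · rintro ⟨hw, hp⟩
      by_cases h1 : w = x
      · subst h1; rw [px] at hp; exact absurd hp her
      by_cases h2 : w ∈ G
      · rw [pG w h2 h1] at hp; exact absurd hp hrh.symm
      rcases hmem w with h' | h' | h' | h' | h'
      · exact absurd h' hw
      · exact Or.inl h'
      · exact absurd h' h1
      · exact Or.inr h'
      · exact absurd h' h2
    · rintro (rfl | hw)
      · exact ⟨hrh.symm ∘ Eq.symm ∘ Eq.symm, by rw [ph]⟩
      · refine ⟨fun hh => hrC (hh ▸ hw), pC w hw⟩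
  have chh : Finset.univ.filter (fun w => w ≠ r ∧ parent w = h) = G := by
    ext w
    simp only [mem_filter, mem_univ, true_and]
    constructor
    · rintro ⟨hw, hp⟩
      by_cases h1 : w = x
      · subst h1; rw [px] at hp; exact absurd hp heh
      by_cases h2 : w ∈ G
      · exact h2
      · rw [pelse w h1 h2] at hp; exact absurd hp hrh
    · intro hw
      refine ⟨fun hh => hrG (hh ▸ hw), pG w hw (fun hh => hxG (hh ▸ hw))⟩
  have che : Finset.univ.filter (fun w => w ≠ r ∧ parent w = e) = {x} := by
    ext w
    simp only [mem_filter, mem_univ, true_and, mem_singleton]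
    constructor
    · rintro ⟨hw, hp⟩
      by_cases h1 : w = x
      · exact h1
      by_cases h2 : w ∈ G
      · rw [pG w h2 h1] at hp; exact absurd hp.symm heh
      · rw [pelse w h1 h2] at hp; exact absurd hp.symm her
    · rintro rfl
      exact ⟨fun hh => hrx (hh.symm), px⟩
  have chother : ∀ v, v ≠ r → v ≠ h → v ≠ e →
      Finset.univ.filter (fun w => w ≠ r ∧ parent w = v) = ∅ := by
    intro v hv1 hv2 hv3
    rw [filter_eq_empty_iff]
    rintro w - ⟨hw, hp⟩
    by_cases h1 : w = x
    · subst h1; rw [px] at hp; exact hv3 hp.symm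
    by_cases h2 : w ∈ G
    · rw [pG w h2 h1] at hp; exact hv2 hp.symm
    · rw [pelse w h1 h2] at hp; exact hv1 hp.symm
  refine ⟨r, parent, mem_univ r, fun v _ => mem_univ _, pr, ?_, ?_, e, mem_univ e, ?_, ?_⟩
  · -- edges
    intro v _ hv
    by_cases h1 : v = x
    · subst h1; rw [px]; exact bex
    by_cases h2 : v ∈ G
    · rw [pG v h2 h1]; exact bhG v h2
    · rw [pelse v h1 h2]
      rcases hmem v with h' | h' | h' | h' | h'
      · exact absurd h' hv
      · exact h' ▸ brh
      · exact absurd h' h1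
      · exact brC v h'
      · exact absurd h' h2
  · -- iterate
    intro v _
    refine ⟨3, ?_⟩
    have it3 : ∀ w, parent^[3] w = parent (parent (parent w)) := by
      intro w
      rw [Function.iterate_succ_apply, Function.iterate_succ_apply,
        Function.iterate_one]
    rw [it3]
    by_cases h1 : v = x
    · subst h1
      rw [px]
      rcases mem_union.1 he with h' | h'
      · rw [pC e h', pr]
      · rw [pG e h' hex2, ph]
    by_cases h2 : v ∈ G
    · rw [pG v h2 h1, ph, pr]
    · rw [pelse v h1 h2, pr, pr]
  · rw [che]; simp
  · intro v _ hv
    by_cases h1 : v = r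
    · subst h1; left; rw [chr, card_insert_of_notMem hhC, hCcard]
    by_cases h2 : v = h
    · subst h2; left; rw [chh, hGcard]
    · right; rw [chother v h1 h2 hv, card_empty]


theorem lemB {V : Type*} [Fintype V] [DecidableEq V] {beats : V → V → Prop}
    (w u aa : V) (C G : Finset V)
    (hCcard : C.card = 3) (hGcard : G.card = 4)
    (hCG : Disjoint C G)
    (hwC : w ∉ C) (hwG : w ∉ G) (huC : u ∉ C) (huG : u ∉ G) (haC : aa ∉ C) (haG : aa ∉ G)
    (hwu : w ≠ u) (hwa : w ≠ aa) (hua : u ≠ aa)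
    (huniv : insert w (insert u (insert aa (C ∪ G))) = Finset.univ)
    (bwu : beats w u) (bwC : ∀ c ∈ C, beats w c) (bua : beats u aa)
    (baG : ∀ g ∈ G, beats aa g) :
    HasKArySpanningTree beats 4 := by
  set parent : V → V := fun v => if v = aa then u else if v ∈ G then aa else w with hpar
  have pa : parent aa = u := by show (if aa = aa then u else _) = u; rw [if_pos rfl]
  have pG : ∀ v ∈ G, parent v = aa := by
    intro v hv
    show (if v = aa then u else if v ∈ G then aa else w) = aa
    rw [if_neg (show ¬ v = aa from fun hh => haG (hh ▸ hv)), if_pos hv]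
  have pelse : ∀ v, v ≠ aa → v ∉ G → parent v = w := by
    intro v hva hvG
    show (if v = aa then u else if v ∈ G then aa else w) = w
    rw [if_neg hva, if_neg hvG]
  have pw : parent w = w := pelse w hwa hwG
  have pu : parent u = w := pelse u hua huG
  have pC : ∀ v ∈ C, parent v = w := fun v hv =>
    pelse v (fun hh => haC (hh ▸ hv)) (fun hh => (disjoint_left.1 hCG hv) hh)
  have hmem : ∀ v : V, v = w ∨ v = u ∨ v = aa ∨ v ∈ C ∨ v ∈ G := by
    intro v
    have : v ∈ insert w (insert u (insert aa (C ∪ G))) := huniv ▸ mem_univ v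
    simpa [mem_insert, mem_union] using this
  have chw : Finset.univ.filter (fun z => z ≠ w ∧ parent z = w) = insert u C := by
    ext z
    simp only [mem_filter, mem_univ, true_and, mem_insert]
    constructor
    · rintro ⟨hz, hp⟩
      by_cases h1 : z = aa
      · subst h1; rw [pa] at hp; exact absurd hp.symm hwu
      by_cases h2 : z ∈ G
      · rw [pG z h2] at hp; exact absurd hp.symm hwa
      rcases hmem z with h' | h' | h' | h' | h'
      · exact absurd h' hz
      · exact Or.inl h'
      · exact absurd h' h1
      · exact Or.inr h'
      · exact absurd h' h2
    · rintro (rfl | hz)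
      · exact ⟨fun hh => hwu hh.symm, pu⟩
      · exact ⟨fun hh => hwC (hh ▸ hz), pC z hz⟩
  have cha : Finset.univ.filter (fun z => z ≠ w ∧ parent z = aa) = G := by
    ext z
    simp only [mem_filter, mem_univ, true_and]
    constructor
    · rintro ⟨hz, hp⟩
      by_cases h1 : z = aa
      · subst h1; rw [pa] at hp; exact absurd hp hua
      by_cases h2 : z ∈ G
      · exact h2
      · rw [pelse z h1 h2] at hp; exact absurd hp hwa
    · intro hz
      exact ⟨fun hh => hwG (hh ▸ hz), pG z hz⟩
  have chu : Finset.univ.filter (fun z => z ≠ w ∧ parent z = u) = {aa} := by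
    ext z
    simp only [mem_filter, mem_univ, true_and, mem_singleton]
    constructor
    · rintro ⟨hz, hp⟩
      by_cases h1 : z = aa
      · exact h1
      by_cases h2 : z ∈ G
      · rw [pG z h2] at hp; exact absurd hp.symm hua
      · rw [pelse z h1 h2] at hp; exact absurd hp.symm (fun hh => hwu hh.symm)
    · rintro rfl
      exact ⟨fun hh => hwa hh.symm, pa⟩
  have chother : ∀ v, v ≠ w → v ≠ aa → v ≠ u →
      Finset.univ.filter (fun z => z ≠ w ∧ parent z = v) = ∅ := by
    intro v hv1 hv2 hv3
    rw [filter_eq_empty_iff]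
    rintro z - ⟨hz, hp⟩
    by_cases h1 : z = aa
    · subst h1; rw [pa] at hp; exact hv3 hp.symm
    by_cases h2 : z ∈ G
    · rw [pG z h2] at hp; exact hv2 hp.symm
    · rw [pelse z h1 h2] at hp; exact hv1 hp.symm
  refine ⟨w, parent, mem_univ w, fun v _ => mem_univ _, pw, ?_, ?_, u, mem_univ u, ?_, ?_⟩
  · intro v _ hv
    by_cases h1 : v = aa
    · subst h1; rw [pa]; exact bua
    by_cases h2 : v ∈ G
    · rw [pG v h2]; exact baG v h2
    · rw [pelse v h1 h2]
      rcases hmem v with h' | h' | h' | h' | h'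
      · exact absurd h' hv
      · exact h' ▸ bwu
      · exact absurd h' h1
      · exact bwC v h'
      · exact absurd h' h2
  · intro v _
    refine ⟨3, ?_⟩
    have it3 : parent^[3] v = parent (parent (parent v)) := by
      rw [Function.iterate_succ_apply, Function.iterate_succ_apply, Function.iterate_one]
    rw [it3]
    by_cases h1 : v = aa
    · subst h1; rw [pa, pu, pw]
    by_cases h2 : v ∈ G
    · rw [pG v h2, pa, pu]
    · rw [pelse v h1 h2, pw, pw]
  · rw [chu]; simp
  · intro v _ hv
    by_cases h1 : v = w
    · subst h1; left; rw [chw, card_insert_of_notMem huC, hCcard]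
    by_cases h2 : v = aa
    · subst h2; left; rw [cha, hGcard]
    · right; rw [chother v h1 h2 hv, card_empty]


theorem two_mul_sum_out {V : Type*} [DecidableEq V] {beats : V → V → Prop}
    [DecidableRel beats] (hT : IsTournament beats) (S : Finset V) :
    2 * ∑ v ∈ S, (S.filter (fun w => beats v w)).card = S.card * (S.card - 1) := by
  have key : ∀ v ∈ S, ∀ w ∈ S,
      ((if beats v w then 1 else 0) + (if beats w v then 1 else 0) : ℕ)
        = if w = v then 0 else 1 := by
    intro v _ w _
    by_cases h : w = v
    · subst h; simp [hT.1 w]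
    · by_cases hb : beats w v
      · have hnb : ¬ beats v w := fun hc => (hT.2 v w (Ne.symm h)).1 hc hb
        simp [h, hb, hnb]
      · have hbv : beats v w := (hT.2 v w (Ne.symm h)).2 hb
        simp [h, hb, hbv]
  have hA : ∑ v ∈ S, (S.filter (fun w => beats v w)).card
      = ∑ v ∈ S, ∑ w ∈ S, (if beats v w then 1 else 0) := by
    refine Finset.sum_congr rfl fun v _ => ?_
    rw [Finset.card_filter]
  have swap : ∑ v ∈ S, ∑ w ∈ S, ((if beats v w then 1 else 0) : ℕ)
      = ∑ v ∈ S, ∑ w ∈ S, ((if beats w v then 1 else 0) : ℕ) := Finset.sum_comm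
  have main : 2 * ∑ v ∈ S, (S.filter (fun w => beats v w)).card
      = ∑ v ∈ S, ∑ w ∈ S, ((if w = v then 0 else 1) : ℕ) := by
    rw [two_mul, hA]
    nth_rewrite 2 [swap]
    rw [← Finset.sum_add_distrib]
    refine Finset.sum_congr rfl fun v hv => ?_
    rw [← Finset.sum_add_distrib]
    exact Finset.sum_congr rfl fun w hw => key v hv w hw
  rw [main]
  have inner : ∀ v ∈ S, ∑ w ∈ S, ((if w = v then 0 else 1) : ℕ) = S.card - 1 := by
    intro v hv
    have : ∑ w ∈ S, ((if w = v then 0 else 1) : ℕ)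
        = (S.filter (fun w => ¬ w = v)).card := by
      rw [Finset.card_filter]
      exact Finset.sum_congr rfl fun w _ => by by_cases h : w = v <;> simp [h]
    rw [this]
    have : S.filter (fun w => ¬ w = v) = S.erase v := by
      ext z; simp [Finset.mem_erase, and_comm]
    rw [this, Finset.card_erase_of_mem hv]
  rw [Finset.sum_congr rfl inner, Finset.sum_const, smul_eq_mul]

theorem exists_max_out {V : Type*} [DecidableEq V] {beats : V → V → Prop}
    [DecidableRel beats] (hT : IsTournament beats) (S : Finset V) (hS : S.Nonempty) :
    ∃ v ∈ S, (∀ u ∈ S, (S.filter (fun w => beats u w)).card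
        ≤ (S.filter (fun w => beats v w)).card) ∧
      S.card ≤ 2 * (S.filter (fun w => beats v w)).card + 1 := by
  obtain ⟨v, hv, hmax⟩ := S.exists_max_image (fun u => (S.filter (fun w => beats u w)).card) hS
  refine ⟨v, hv, hmax, ?_⟩
  by_contra hlt
  push_neg at hlt
  set d := (S.filter (fun w => beats v w)).card with hd
  set s := S.card with hs
  have hsum : ∑ u ∈ S, (S.filter (fun w => beats u w)).card ≤ s * d := by
    have := Finset.sum_le_card_nsmul S (fun u => (S.filter (fun w => beats u w)).card) d
      (fun u hu => hmax u hu)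
    simpa [smul_eq_mul] using this
  have h2 := two_mul_sum_out hT S
  have hge : s * (2 * d + 1) ≤ s * (s - 1) := Nat.mul_le_mul_left s (by omega)
  have hle : s * (s - 1) ≤ 2 * (s * d) := by rw [← h2]; omega
  have hexp : s * (2 * d + 1) = 2 * (s * d) + s := by ring
  have hspos : 0 < s := Finset.card_pos.2 hS
  omega


section Apps
variable {V : Type*} [Fintype V] [DecidableEq V] {beats : V → V → Prop}
variable {a : V} {A B : Finset V}

theorem appHubW (hT : IsTournament beats)
    (haA : a ∉ A) (haB : a ∉ B) (hAB : Disjoint A B)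
    (huniv : insert a (A ∪ B) = Finset.univ)
    (hcard : A.card + B.card = 9)
    (hbA : ∀ v ∈ A, beats a v)
    (w : V) (hw : w ∈ A) (m x : V) (hm : m ∈ B) (hx : x ∈ B) (hmx : m ≠ x)
    (F : Finset V) (hF : F ⊆ A) (hwF : w ∉ F) (hFcard : F.card + B.card = 5)
    (bwm : beats w m) (bmx : beats m x)
    (bwB : ∀ v ∈ B, v ≠ m → v ≠ x → beats w v)
    (bwF : ∀ f ∈ F, beats w f) :
    HasKArySpanningTree beats 4 := by
  have hwB : w ∉ B := disjoint_left.1 hAB hw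
  have hmA : m ∉ A := disjoint_right.1 hAB hm
  have hxA : x ∉ A := disjoint_right.1 hAB hx
  have hiwF : insert w F ⊆ A := Finset.insert_subset_iff.2 ⟨hw, hF⟩
  have hBpos : 0 < B.card := card_pos.2 ⟨x, hx⟩
  set C := A \ insert w F with hC
  set G := B.erase x ∪ F with hG
  have hCcard : C.card = 3 := by
    rw [hC, card_sdiff_of_subset hiwF, card_insert_of_notMem hwF]; omega
  have hGdisj : Disjoint (B.erase x) F :=
    Finset.disjoint_of_subset_left (erase_subset x B)
      (Finset.disjoint_of_subset_right hF hAB.symm)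
  have hGcard : G.card = 4 := by
    rw [hG, card_union_of_disjoint hGdisj, card_erase_of_mem hx]; omega
  have hCsub : C ⊆ A := sdiff_subset
  refine lemA a w m x C G hCcard hGcard ?_ ?_ ?_ ?_ ?_ ?_ ?_ ?_ ?_ ?_ ?_ ?_
    (hbA w hw) (fun c hc => hbA c (hCsub hc)) ?_ bmx
  · -- Disjoint C G
    rw [hG]
    refine Finset.disjoint_union_right.2 ⟨?_, ?_⟩
    · exact Finset.disjoint_of_subset_left hCsub
        (Finset.disjoint_of_subset_right (erase_subset x B) hAB)
    · exact Finset.disjoint_of_subset_right (subset_insert w F) sdiff_disjoint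
  · exact fun h => haA (hCsub h)
  · rw [hG]; rw [mem_union]; rintro (h | h)
    · exact haB (erase_subset x B h)
    · exact haA (hF h)
  · rw [hC]; exact fun h => (mem_sdiff.1 h).2 (mem_insert_self w F)
  · rw [hG]; rw [mem_union]; rintro (h | h)
    · exact hwB (erase_subset x B h)
    · exact hwF h
  · exact fun h => hxA (hCsub h)
  · rw [hG]; rw [mem_union]; rintro (h | h)
    · exact (mem_erase.1 h).1 rfl
    · exact hxA (hF h)
  · exact fun h => haA (h ▸ hw)
  · exact fun h => haB (h ▸ hx)
  · exact fun h => hxA (h ▸ hw)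
  · -- univ
    apply Finset.eq_univ_of_forall
    intro y
    have hy : y ∈ insert a (A ∪ B) := huniv ▸ mem_univ y
    simp only [mem_insert, mem_union] at hy
    simp only [mem_insert, mem_union, hC, hG, mem_sdiff, mem_erase]
    rcases hy with rfl | hyA | hyB
    · exact Or.inl rfl
    · by_cases h1 : y = w
      · exact Or.inr (Or.inl h1)
      by_cases h2 : y ∈ F
      · exact Or.inr (Or.inr (Or.inr (Or.inr (Or.inr h2))))
      · refine Or.inr (Or.inr (Or.inr (Or.inl ⟨hyA, ?_⟩)))
        simp [h1, h2]
    · by_cases h1 : y = x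
      · exact Or.inr (Or.inr (Or.inl h1))
      · exact Or.inr (Or.inr (Or.inr (Or.inr (Or.inl ⟨h1, hyB⟩))))
  · rw [hG]; exact mem_union_right _ (mem_union_left _ (mem_erase.2 ⟨hmx, hm⟩))
  · -- beats w g for g in G
    intro g hg
    rw [hG, mem_union] at hg
    rcases hg with hg | hg
    · have := mem_erase.1 hg
      by_cases h1 : g = m
      · exact h1 ▸ bwm
      · exact bwB g this.2 h1 this.1
    · exact bwF g hg

theorem appI (hT : IsTournament beats)
    (haA : a ∉ A) (haB : a ∉ B) (hAB : Disjoint A B)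
    (huniv : insert a (A ∪ B) = Finset.univ)
    (hcard : A.card + B.card = 9)
    (hbA : ∀ v ∈ A, beats a v) (hbB : ∀ v ∈ B, beats v a)
    (r : V) (hr : r ∈ B)
    (F : Finset V) (hF : F ⊆ A) (hFcard : F.card + B.card = 4)
    (brB : ∀ v ∈ B, v ≠ r → beats r v)
    (brF : ∀ f ∈ F, beats r f) :
    HasKArySpanningTree beats 4 := by
  have hrA : r ∉ A := disjoint_right.1 hAB hr
  have hBpos : 0 < B.card := card_pos.2 ⟨r, hr⟩
  have hPcard : (A \ F).card = 5 := by rw [card_sdiff_of_subset hF]; omega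
  have h2P : 1 < (A \ F).card := by omega
  obtain ⟨y, hy, z, hz, hyz⟩ := Finset.one_lt_card.1 h2P
  have hkey : ∀ p q : V, p ∈ A \ F → q ∈ A \ F → p ≠ q → beats p q →
      HasKArySpanningTree beats 4 := by
    intro e x he hx hex bex
    have hxA : x ∈ A := (mem_sdiff.1 hx).1
    have hxF : x ∉ F := (mem_sdiff.1 hx).2
    set C := B.erase r ∪ F with hC
    set G := (A \ F).erase x with hG
    have hCcard : C.card = 3 := by
      rw [hC, card_union_of_disjoint
        (Finset.disjoint_of_subset_left (erase_subset r B)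
          (Finset.disjoint_of_subset_right hF hAB.symm)),
        card_erase_of_mem hr]
      omega
    have hGcard : G.card = 4 := by rw [hG, card_erase_of_mem hx, hPcard]
    have hGsub : G ⊆ A := (erase_subset x (A \ F)).trans sdiff_subset
    refine lemA r a e x C G hCcard hGcard ?_ ?_ ?_ ?_ ?_ ?_ ?_ ?_ ?_ ?_ ?_ ?_
      (hbB r hr) ?_ (fun g hg => hbA g (hGsub hg)) bex
    · rw [hC]
      refine Finset.disjoint_union_left.2 ⟨?_, ?_⟩
      · exact Finset.disjoint_of_subset_left (erase_subset r B)
          (Finset.disjoint_of_subset_right hGsub hAB.symm)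
      · exact Finset.disjoint_of_subset_right (erase_subset x (A \ F)) sdiff_disjoint.symm
    · rw [hC, mem_union]; rintro (h | h)
      · exact (mem_erase.1 h).1 rfl
      · exact hrA (hF h)
    · exact fun h => hrA (hGsub h)
    · rw [hC, mem_union]; rintro (h | h)
      · exact haB (erase_subset r B h)
      · exact haA (hF h)
    · exact fun h => haA (hGsub h)
    · rw [hC, mem_union]; rintro (h | h)
      · exact (disjoint_right.1 hAB (erase_subset r B h)) hxA
      · exact hxF h
    · rw [hG]; exact fun h => (mem_erase.1 h).1 rfl
    · exact fun h => haB (h ▸ hr)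
    · exact fun h => hrA (h ▸ hxA)
    · exact fun h => haA (h ▸ hxA)
    · apply Finset.eq_univ_of_forall
      intro q
      have hq : q ∈ insert a (A ∪ B) := huniv ▸ mem_univ q
      simp only [mem_insert, mem_union] at hq
      simp only [mem_insert, mem_union, hC, hG, mem_erase, mem_sdiff]
      rcases hq with rfl | hqA | hqB
      · exact Or.inr (Or.inl rfl)
      · by_cases h1 : q = x
        · exact Or.inr (Or.inr (Or.inl h1))
        by_cases h2 : q ∈ F
        · exact Or.inr (Or.inr (Or.inr (Or.inl (Or.inr h2))))
        · exact Or.inr (Or.inr (Or.inr (Or.inr ⟨h1, hqA, h2⟩)))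
      · by_cases h1 : q = r
        · exact Or.inl h1
        · exact Or.inr (Or.inr (Or.inr (Or.inl (Or.inl ⟨h1, hqB⟩))))
    · rw [hG]; exact mem_union_right _ (mem_erase.2 ⟨hex, he⟩)
    · intro c hc
      rw [hC, mem_union] at hc
      rcases hc with hc | hc
      · exact brB c (erase_subset r B hc) (mem_erase.1 hc).1
      · exact brF c hc
  by_cases hb : beats y z
  · exact hkey y z hy hz hyz hb
  · exact hkey z y hz hy hyz.symm ((hT.2 z y hyz.symm).2 hb)

theorem appII (hT : IsTournament beats)
    (haA : a ∉ A) (haB : a ∉ B) (hAB : Disjoint A B)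
    (huniv : insert a (A ∪ B) = Finset.univ)
    (hcard : A.card + B.card = 9)
    (hbA : ∀ v ∈ A, beats a v) (hbB : ∀ v ∈ B, beats v a)
    (r x : V) (hr : r ∈ B) (hx : x ∈ B) (hrx : r ≠ x)
    (F : Finset V) (hF : F ⊆ A) (hFcard : F.card + B.card = 5)
    (brB : ∀ v ∈ B, v ≠ r → v ≠ x → beats r v)
    (brF : ∀ f ∈ F, beats r f)
    (e : V) (heA : e ∈ A) (bex : beats e x) :
    HasKArySpanningTree beats 4 := by
  have hrA : r ∉ A := disjoint_right.1 hAB hr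
  have hxA : x ∉ A := disjoint_right.1 hAB hx
  have hrex : r ∈ B.erase x := mem_erase.2 ⟨hrx, hr⟩
  set C := (B.erase x).erase r ∪ F with hC
  set G := A \ F with hG
  have hBdisjF : Disjoint ((B.erase x).erase r) F :=
    Finset.disjoint_of_subset_left ((erase_subset r _).trans (erase_subset x B))
      (Finset.disjoint_of_subset_right hF hAB.symm)
  have hCcard : C.card = 3 := by
    rw [hC, card_union_of_disjoint hBdisjF, card_erase_of_mem hrex,
      card_erase_of_mem hx]
    have : 1 < B.card := Finset.one_lt_card.2 ⟨r, hr, x, hx, hrx⟩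
    omega
  have hGcard : G.card = 4 := by
    rw [hG, card_sdiff_of_subset hF]; omega
  have hGsub : G ⊆ A := sdiff_subset
  have hCB : (B.erase x).erase r ⊆ B := (erase_subset r _).trans (erase_subset x B)
  refine lemA r a e x C G hCcard hGcard ?_ ?_ ?_ ?_ ?_ ?_ ?_ ?_ ?_ ?_ ?_ ?_
    (hbB r hr) ?_ (fun g hg => hbA g (hGsub hg)) bex
  · rw [hC, hG]
    refine Finset.disjoint_union_left.2 ⟨?_, ?_⟩
    · exact Finset.disjoint_of_subset_left hCB
        (Finset.disjoint_of_subset_right sdiff_subset hAB.symm)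
    · exact sdiff_disjoint.symm
  · rw [hC, mem_union]; rintro (h | h)
    · exact (mem_erase.1 h).1 rfl
    · exact hrA (hF h)
  · exact fun h => hrA (hGsub h)
  · rw [hC, mem_union]; rintro (h | h)
    · exact haB (hCB h)
    · exact haA (hF h)
  · exact fun h => haA (hGsub h)
  · rw [hC, mem_union]; rintro (h | h)
    · exact (mem_erase.1 (erase_subset r _ h)).1 rfl
    · exact hxA (hF h)
  · exact fun h => hxA (hGsub h)
  · exact fun h => haB (h ▸ hr)
  · exact hrx
  · exact fun h => haB (h ▸ hx)
  · apply Finset.eq_univ_of_forall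
    intro q
    have hq : q ∈ insert a (A ∪ B) := huniv ▸ mem_univ q
    simp only [mem_insert, mem_union] at hq
    simp only [mem_insert, mem_union, hC, hG, mem_erase, mem_sdiff]
    rcases hq with rfl | hqA | hqB
    · exact Or.inr (Or.inl rfl)
    · by_cases h2 : q ∈ F
      · exact Or.inr (Or.inr (Or.inr (Or.inl (Or.inr h2))))
      · exact Or.inr (Or.inr (Or.inr (Or.inr ⟨hqA, h2⟩)))
    · by_cases h1 : q = r
      · exact Or.inl h1
      by_cases h3 : q = x
      · exact Or.inr (Or.inr (Or.inl h3))
      · exact Or.inr (Or.inr (Or.inr (Or.inl (Or.inl ⟨h1, h3, hqB⟩))))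
  · rw [hC, hG]
    by_cases h2 : e ∈ F
    · exact mem_union_left _ (mem_union_right _ h2)
    · exact mem_union_right _ (mem_sdiff.2 ⟨heA, h2⟩)
  · intro c hc
    rw [hC, mem_union] at hc
    rcases hc with hc | hc
    · exact brB c (hCB hc) (mem_erase.1 hc).1 (mem_erase.1 (erase_subset r _ hc)).1
    · exact brF c hc

end Apps


set_option maxHeartbeats 1600000 in
/-- Every tournament on 10 vertices contains a 4-ary spanning tree. -/
theorem stmt10 (W : Type*) [Fintype W] [DecidableEq W]
    (hcard : Fintype.card W = 10)
    (beats : W → W → Prop) (hT : IsTournament beats) :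
    HasKArySpanningTree beats 4 := by
  classical
  have irr : ∀ v : W, ¬ beats v v := hT.1
  have tot : ∀ u v : W, u ≠ v → ¬ beats u v → beats v u :=
    fun u v h hn => (hT.2 v u h.symm).2 hn
  have nb : ∀ u v : W, beats u v → ¬ beats v u := by
    intro u v h hc
    rcases eq_or_ne u v with rfl | hne
    · exact irr u h
    · exact (hT.2 u v hne).1 h hc
  have hWne : (Finset.univ : Finset W).Nonempty := by
    rw [← Finset.card_pos, Finset.card_univ, hcard]; omega
  have hWcard : (Finset.univ : Finset W).card = 10 := by rw [Finset.card_univ, hcard]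
  obtain ⟨a, -, hamax, habig⟩ := exists_max_out hT Finset.univ hWne
  set A := Finset.univ.filter (fun v => beats a v) with hA
  set B := Finset.univ.filter (fun v => ¬ beats a v ∧ v ≠ a) with hB
  have hAmem : ∀ v, v ∈ A ↔ beats a v := by intro v; simp [hA]
  have hBmem : ∀ v, v ∈ B ↔ ¬ beats a v ∧ v ≠ a := by intro v; simp [hB]
  have haA : a ∉ A := fun h => irr a ((hAmem a).1 h)
  have haB : a ∉ B := fun h => ((hBmem a).1 h).2 rfl
  have hABd : Disjoint A B := by
    rw [Finset.disjoint_left]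
    intro v hv hv2
    exact ((hBmem v).1 hv2).1 ((hAmem v).1 hv)
  have huniv : insert a (A ∪ B) = Finset.univ := by
    apply Finset.eq_univ_of_forall
    intro v
    simp only [mem_insert, mem_union, hAmem, hBmem]
    by_cases h1 : v = a
    · exact Or.inl h1
    by_cases h2 : beats a v
    · exact Or.inr (Or.inl h2)
    · exact Or.inr (Or.inr ⟨h2, h1⟩)
  have hcard9 : A.card + B.card = 9 := by
    have h1 : (insert a (A ∪ B)).card = 10 := by rw [huniv, hWcard]
    rw [Finset.card_insert_of_notMem (by
      simp only [mem_union]; rintro (h | h); exact haA h; exact haB h),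
      Finset.card_union_of_disjoint hABd] at h1
    omega
  have hbA : ∀ v ∈ A, beats a v := fun v hv => (hAmem v).1 hv
  have hbB : ∀ v ∈ B, beats v a := by
    intro v hv
    have := (hBmem v).1 hv
    exact tot a v (Ne.symm this.2) this.1
  have houta : (Finset.univ.filter (fun w => beats a w)).card = A.card := rfl
  have hA5 : 5 ≤ A.card := by
    rw [hWcard] at habig; rw [houta] at habig; omega
  have hB4 : B.card ≤ 4 := by omega
  have hAsub : ∀ v ∈ A, v ≠ a := fun v hv h => haA (h ▸ hv)
  -- O1 : every B vertex has an in-neighbor in A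
  have hO1 : ∀ v ∈ B, ∃ w ∈ A, beats w v := by
    intro v hv
    by_contra hc
    push_neg at hc
    have hsub : insert a A ⊆ Finset.univ.filter (fun w => beats v w) := by
      intro w hw
      rcases Finset.mem_insert.1 hw with rfl | hw
      · exact Finset.mem_filter.2 ⟨Finset.mem_univ _, hbB v hv⟩
      · refine Finset.mem_filter.2 ⟨Finset.mem_univ _, ?_⟩
        refine tot w v ?_ (hc w hw)
        exact fun h => disjoint_left.1 hABd (h ▸ hw) hv
    have hle := Finset.card_le_card hsub
    rw [Finset.card_insert_of_notMem haA] at hle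
    have := hamax v (Finset.mem_univ v)
    rw [houta] at this
    omega
  -- case on B.card
  have hBc : B.card = 0 ∨ B.card = 1 ∨ B.card = 2 ∨ B.card = 3 ∨ B.card = 4 := by omega
  -- helper to pick a subset of given size
  rcases hBc with hb | hb | hb | hb | hb
  · -- b = 0
    have hA9 : A.card = 9 := by omega
    have hBe : B = ∅ := Finset.card_eq_zero.1 hb
    have hunivA : insert a A = Finset.univ := by
      rw [← huniv, hBe, Finset.union_empty]
    have hAne : A.Nonempty := Finset.card_pos.1 (by omega)
    obtain ⟨h, hhA, -, hbig⟩ := exists_max_out hT A hAne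
    have h4 : 4 ≤ (A.filter (fun w => beats h w)).card := by omega
    obtain ⟨G, hGsub, hGcard⟩ := Finset.exists_subset_card_eq h4
    have hGA : G ⊆ A := hGsub.trans (Finset.filter_subset _ _)
    have hbhG : ∀ g ∈ G, beats h g := fun g hg => (Finset.mem_filter.1 (hGsub hg)).2
    have hhG : h ∉ G := fun hg => irr h (hbhG h hg)
    have hinshG : insert h G ⊆ A := Finset.insert_subset hhA hGA
    set P := A \ insert h G with hP
    have hPcard : P.card = 4 := by
      rw [hP, Finset.card_sdiff_of_subset hinshG, Finset.card_insert_of_notMem hhG, hGcard, hA9]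
    have hPA : P ⊆ A := Finset.sdiff_subset
    have hkey : ∀ e x : W, e ∈ P → x ∈ P → e ≠ x → beats e x →
        HasKArySpanningTree beats 4 := by
      intro e x he hx hex bex
      set C := P.erase x with hC
      have hCcard : C.card = 3 := by rw [hC, Finset.card_erase_of_mem hx, hPcard]
      have hCP : C ⊆ P := Finset.erase_subset _ _
      have hPdisj : Disjoint P (insert h G) := Finset.sdiff_disjoint
      refine lemA a h e x C G hCcard hGcard ?_ ?_ ?_ ?_ ?_ ?_ ?_ ?_ ?_ ?_ ?_ ?_
        (hbA h hhA) (fun c hc => hbA c (hPA (hCP hc))) hbhG bex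
      · exact Finset.disjoint_of_subset_left hCP
          (Finset.disjoint_of_subset_right (Finset.subset_insert h G) hPdisj)
      · exact fun hh => haA (hPA (hCP hh))
      · exact fun hh => haA (hGA hh)
      · exact fun hh => (Finset.disjoint_left.1 hPdisj (hCP hh))
          (Finset.mem_insert_self h G)
      · exact hhG
      · exact fun hh => (Finset.mem_erase.1 hh).1 rfl
      · exact fun hh => (Finset.disjoint_left.1 hPdisj hx) (Finset.mem_insert_of_mem hh)
      · exact fun hh => (hAsub h hhA) hh.symm
      · exact fun hh => (hAsub x (hPA hx)) hh.symm
      · exact fun hh => (Finset.disjoint_left.1 hPdisj hx) (hh ▸ Finset.mem_insert_self h G)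
      · apply Finset.eq_univ_of_forall
        intro q
        have hq : q ∈ insert a A := hunivA ▸ Finset.mem_univ q
        simp only [Finset.mem_insert, Finset.mem_union, hC] at hq ⊢
        rcases hq with rfl | hqA
        · exact Or.inl rfl
        by_cases h1 : q = h
        · exact Or.inr (Or.inl h1)
        by_cases h2 : q ∈ G
        · exact Or.inr (Or.inr (Or.inr (Or.inr h2)))
        by_cases h3 : q = x
        · exact Or.inr (Or.inr (Or.inl h3))
        · refine Or.inr (Or.inr (Or.inr (Or.inl (Finset.mem_erase.2 ⟨h3, ?_⟩))))
          rw [hP]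
          exact Finset.mem_sdiff.2 ⟨hqA, by simp [h1, h2]⟩
      · exact Finset.mem_union_left _ (Finset.mem_erase.2 ⟨hex, he⟩)
    have h2P : 1 < P.card := by omega
    obtain ⟨y, hy, z, hz, hyz⟩ := Finset.one_lt_card.1 h2P
    by_cases hbz : beats y z
    · exact hkey y z hy hz hyz hbz
    · exact hkey z y hz hy hyz.symm (tot y z hyz hbz)
  · -- b = 1
    obtain ⟨u, hBu⟩ := Finset.card_eq_one.1 hb
    have huB : u ∈ B := by rw [hBu]; exact Finset.mem_singleton_self u
    have hBall : ∀ z ∈ B, z = u := by rw [hBu]; intro z hz; exact Finset.mem_singleton.1 hz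
    have hA8 : A.card = 8 := by omega
    by_cases hdeg : 3 ≤ (A.filter (fun w => beats u w)).card
    · obtain ⟨F, hFsub, hFcard⟩ := Finset.exists_subset_card_eq hdeg
      exact appI hT haA haB hABd huniv hcard9 hbA hbB u huB F
        (hFsub.trans (Finset.filter_subset _ _)) (by omega)
        (fun v hv hne => absurd (hBall v hv) hne)
        (fun f hf => (Finset.mem_filter.1 (hFsub hf)).2)
    · push_neg at hdeg
      have hsplit := Finset.card_filter_add_card_filter_not
        (s := A) (p := fun w => beats u w)
      set W' := A.filter (fun w => ¬ beats u w) with hW'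
      have hW6 : 6 ≤ W'.card := by omega
      have hW'A : W' ⊆ A := Finset.filter_subset _ _
      obtain ⟨w, hwW, -, hwbig⟩ := exists_max_out hT W' (Finset.card_pos.1 (by omega))
      have hw3 : 3 ≤ (W'.filter (fun z => beats w z)).card := by omega
      obtain ⟨C, hCsub, hCcard⟩ := Finset.exists_subset_card_eq hw3
      have hCW : C ⊆ W' := hCsub.trans (Finset.filter_subset _ _)
      have hCA : C ⊆ A := hCW.trans hW'A
      have hbwC : ∀ c ∈ C, beats w c := fun c hc => (Finset.mem_filter.1 (hCsub hc)).2
      have hwC : w ∉ C := fun hh => irr w (hbwC w hh)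
      have hwA : w ∈ A := hW'A hwW
      have hwu : w ≠ u := fun hh => Finset.disjoint_left.1 hABd (hh ▸ hwA) huB
      have hbwu : beats w u := tot u w (Ne.symm hwu) (Finset.mem_filter.1 hwW).2
      have hinswC : insert w C ⊆ A := Finset.insert_subset hwA hCA
      set G := A \ insert w C with hG
      have hGcard : G.card = 4 := by
        rw [hG, Finset.card_sdiff_of_subset hinswC, Finset.card_insert_of_notMem hwC, hCcard, hA8]
      have hGA : G ⊆ A := Finset.sdiff_subset
      have hGdisj : Disjoint G (insert w C) := Finset.sdiff_disjoint
      refine lemB w u a C G hCcard hGcard ?_ hwC ?_ ?_ ?_ ?_ ?_ hwu ?_ ?_ ?_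
        hbwu hbwC (hbB u huB) (fun g hg => hbA g (hGA hg))
      · exact Finset.disjoint_of_subset_left (Finset.subset_insert w C) hGdisj.symm
      · exact fun hh => Finset.disjoint_left.1 hGdisj hh (Finset.mem_insert_self w C)
      · exact fun hh => Finset.disjoint_left.1 hABd (hCA hh) huB
      · exact fun hh => Finset.disjoint_left.1 hABd (hGA hh) huB
      · exact fun hh => haA (hCA hh)
      · exact fun hh => haA (hGA hh)
      · exact fun hh => (hAsub w hwA) hh
      · exact fun hh => ((hBmem u).1 huB).2 hh
      · apply Finset.eq_univ_of_forall
        intro q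
        have hq : q ∈ insert a (A ∪ B) := huniv ▸ Finset.mem_univ q
        simp only [Finset.mem_insert, Finset.mem_union] at hq ⊢
        rcases hq with rfl | hqA | hqB
        · exact Or.inr (Or.inr (Or.inl rfl))
        · by_cases h1 : q = w
          · exact Or.inl h1
          by_cases h2 : q ∈ C
          · exact Or.inr (Or.inr (Or.inr (Or.inl h2)))
          · refine Or.inr (Or.inr (Or.inr (Or.inr ?_)))
            rw [hG]
            exact Finset.mem_sdiff.2 ⟨hqA, by simp [h1, h2]⟩
        · exact Or.inr (Or.inl (hBall q hqB))
  · -- b = 2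
    obtain ⟨u, v, huvne, hB2⟩ := Finset.card_eq_two.1 hb
    have huB : u ∈ B := by rw [hB2]; simp
    have hvB : v ∈ B := by rw [hB2]; simp
    have hBall : ∀ z ∈ B, z = u ∨ z = v := by
      intro z hz; rw [hB2] at hz; simpa using hz
    have hA7 : A.card = 7 := by omega
    have key : ∀ p q : W, p ∈ B → q ∈ B → p ≠ q → beats p q →
        HasKArySpanningTree beats 4 := by
      intro p q hp hq hpq bpq
      have hall : ∀ z ∈ B, z = p ∨ z = q := by
        intro z hz
        rcases hBall z hz with rfl | rfl
        · rcases hBall p hp with rfl | rfl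
          · exact Or.inl rfl
          · rcases hBall q hq with rfl | rfl
            · exact Or.inr rfl
            · exact absurd rfl hpq
        · rcases hBall q hq with rfl | rfl
          · rcases hBall p hp with rfl | rfl
            · exact absurd rfl hpq
            · exact Or.inl rfl
          · exact Or.inr rfl
      by_cases hdeg : 2 ≤ (A.filter (fun w => beats p w)).card
      · obtain ⟨F, hFsub, hFcard⟩ := Finset.exists_subset_card_eq hdeg
        refine appI hT haA haB hABd huniv hcard9 hbA hbB p hp F
          (hFsub.trans (Finset.filter_subset _ _)) (by omega) ?_
          (fun f hf => (Finset.mem_filter.1 (hFsub hf)).2)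
        intro z hz hzp
        rcases hall z hz with rfl | rfl
        · exact absurd rfl hzp
        · exact bpq
      · push_neg at hdeg
        have hsplit := Finset.card_filter_add_card_filter_not
          (s := A) (p := fun w => beats p w)
        set W' := A.filter (fun w => ¬ beats p w) with hW'
        have hW6 : 6 ≤ W'.card := by omega
        have hW'A : W' ⊆ A := Finset.filter_subset _ _
        obtain ⟨w, hwW, -, hwbig⟩ := exists_max_out hT W' (Finset.card_pos.1 (by omega))
        have hw3 : 3 ≤ (W'.filter (fun z => beats w z)).card := by omega
        obtain ⟨F, hFsub, hFcard⟩ := Finset.exists_subset_card_eq hw3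
        have hFA : F ⊆ A := (hFsub.trans (Finset.filter_subset _ _)).trans hW'A
        have hbwF : ∀ f ∈ F, beats w f := fun f hf => (Finset.mem_filter.1 (hFsub hf)).2
        have hwF : w ∉ F := fun hh => irr w (hbwF w hh)
        have hwA : w ∈ A := hW'A hwW
        have hwp : w ≠ p := fun hh => Finset.disjoint_left.1 hABd (hh ▸ hwA) hp
        have hbwp : beats w p := tot p w (Ne.symm hwp) (Finset.mem_filter.1 hwW).2
        refine appHubW hT haA haB hABd huniv hcard9 hbA w hwA p q hp hq hpq
          F hFA hwF (by omega) hbwp bpq ?_ hbwF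
        intro z hz hz1 hz2
        rcases hall z hz with rfl | rfl
        · exact absurd rfl hz1
        · exact absurd rfl hz2
    by_cases hbz : beats u v
    · exact key u v huB hvB huvne hbz
    · exact key v u hvB huB huvne.symm (tot u v huvne hbz)
  · -- b = 3
    obtain ⟨u, v, t, huv, hut, hvt, hB3⟩ := Finset.card_eq_three.1 hb
    have huB : u ∈ B := by rw [hB3]; simp
    have hvB : v ∈ B := by rw [hB3]; simp
    have htB : t ∈ B := by rw [hB3]; simp
    have hBall3 : ∀ z ∈ B, z = u ∨ z = v ∨ z = t := by
      intro z hz; rw [hB3] at hz; simpa using hz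
    have hA6 : A.card = 6 := by omega
    by_cases hI : ∃ r ∈ B, (∀ z ∈ B, z ≠ r → beats r z) ∧
        1 ≤ (A.filter (fun w => beats r w)).card
    · obtain ⟨r, hr, hdom, hdeg⟩ := hI
      obtain ⟨F, hFsub, hFcard⟩ := Finset.exists_subset_card_eq hdeg
      exact appI hT haA haB hABd huniv hcard9 hbA hbB r hr F
        (hFsub.trans (Finset.filter_subset _ _)) (by omega) hdom
        (fun f hf => (Finset.mem_filter.1 (hFsub hf)).2)
    by_cases hII : ∃ r ∈ B, ∃ x ∈ B, x ≠ r ∧ (∀ z ∈ B, z ≠ r → z ≠ x → beats r z) ∧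
        2 ≤ (A.filter (fun w => beats r w)).card
    · obtain ⟨r, hr, x, hx, hxr, hsemi, hdeg⟩ := hII
      obtain ⟨F, hFsub, hFcard⟩ := Finset.exists_subset_card_eq hdeg
      obtain ⟨e, heA, bex⟩ := hO1 x hx
      exact appII hT haA haB hABd huniv hcard9 hbA hbB r x hr hx (Ne.symm hxr) F
        (hFsub.trans (Finset.filter_subset _ _)) (by omega) hsemi
        (fun f hf => (Finset.mem_filter.1 (hFsub hf)).2) e heA bex
    push_neg at hI hII
    have dom3 : ∀ d p q : W, d ∈ B → p ∈ B → q ∈ B → d ≠ p → d ≠ q → p ≠ q →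
        (∀ z ∈ B, z = d ∨ z = p ∨ z = q) →
        beats d p → beats d q → beats p q → HasKArySpanningTree beats 4 := by
      intro d p q hd hp hq hdp hdq hpq hall bdp bdq bpq
      have hdomd : ∀ z ∈ B, z ≠ d → beats d z := by
        intro z hz hzd
        rcases hall z hz with rfl | rfl | rfl
        · exact absurd rfl hzd
        · exact bdp
        · exact bdq
      have hdeg0 : (A.filter (fun w => beats d w)).card = 0 := by
        have := hI d hd hdomd; omega
      have hdA : ∀ f ∈ A, beats f d := by
        intro f hf
        have hfd : f ≠ d := fun hh => Finset.disjoint_left.1 hABd (hh ▸ hf) hd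
        refine tot d f (Ne.symm hfd) (fun hc => ?_)
        have : f ∈ A.filter (fun w => beats d w) := Finset.mem_filter.2 ⟨hf, hc⟩
        rw [Finset.card_eq_zero.1 hdeg0] at this
        exact absurd this (Finset.notMem_empty f)
      have hsemip : ∀ z ∈ B, z ≠ p → z ≠ d → beats p z := by
        intro z hz h1 h2
        rcases hall z hz with rfl | rfl | rfl
        · exact absurd rfl h2
        · exact absurd rfl h1
        · exact bpq
      have hdegp : (A.filter (fun w => beats p w)).card ≤ 1 := by
        have := hII p hp d hd hdp hsemip; omega
      have hsplit := Finset.card_filter_add_card_filter_not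
        (s := A) (p := fun w => beats p w)
      set W' := A.filter (fun w => ¬ beats p w) with hW'
      have hW5 : 5 ≤ W'.card := by omega
      have hW'A : W' ⊆ A := Finset.filter_subset _ _
      obtain ⟨w, hwW, -, hwbig⟩ := exists_max_out hT W' (Finset.card_pos.1 (by omega))
      have hw2 : 2 ≤ (W'.filter (fun z => beats w z)).card := by omega
      obtain ⟨F, hFsub, hFcard⟩ := Finset.exists_subset_card_eq hw2
      have hFA : F ⊆ A := (hFsub.trans (Finset.filter_subset _ _)).trans hW'A
      have hbwF : ∀ f ∈ F, beats w f := fun f hf => (Finset.mem_filter.1 (hFsub hf)).2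
      have hwF : w ∉ F := fun hh => irr w (hbwF w hh)
      have hwA : w ∈ A := hW'A hwW
      have hwp : w ≠ p := fun hh => Finset.disjoint_left.1 hABd (hh ▸ hwA) hp
      have hbwp : beats w p := tot p w (Ne.symm hwp) (Finset.mem_filter.1 hwW).2
      refine appHubW hT haA haB hABd huniv hcard9 hbA w hwA d q hd hq hdq
        F hFA hwF (by omega) (hdA w hwA) bdq ?_ hbwF
      intro z hz hz1 hz2
      rcases hall z hz with rfl | rfl | rfl
      · exact absurd rfl hz1
      · exact hbwp
      · exact absurd rfl hz2
    have cyc3 : ∀ p q s : W, p ∈ B → q ∈ B → s ∈ B → p ≠ q → p ≠ s → q ≠ s →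
        (∀ z ∈ B, z = p ∨ z = q ∨ z = s) →
        beats p q → beats q s → beats s p → HasKArySpanningTree beats 4 := by
      intro p q s hp hq hs hpq hps hqs hall bpq bqs bsp
      have hsemip : ∀ z ∈ B, z ≠ p → z ≠ s → beats p z := by
        intro z hz h1 h2
        rcases hall z hz with rfl | rfl | rfl
        · exact absurd rfl h1
        · exact bpq
        · exact absurd rfl h2
      have hdegp : (A.filter (fun w => beats p w)).card ≤ 1 := by
        have := hII p hp s hs (Ne.symm hps) hsemip; omega
      have hsemis : ∀ z ∈ B, z ≠ s → z ≠ q → beats s z := by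
        intro z hz h1 h2
        rcases hall z hz with rfl | rfl | rfl
        · exact bsp
        · exact absurd rfl h2
        · exact absurd rfl h1
      have hdegs : (A.filter (fun w => beats s w)).card ≤ 1 := by
        have := hII s hs q hq (Ne.symm hqs).symm hsemis
        omega
      have hsplit := Finset.card_filter_add_card_filter_not
        (s := A) (p := fun w => beats p w ∨ beats s w)
      have hcup : (A.filter (fun w => beats p w ∨ beats s w)).card ≤ 2 := by
        have hsub : A.filter (fun w => beats p w ∨ beats s w) ⊆
            A.filter (fun w => beats p w) ∪ A.filter (fun w => beats s w) := by
          intro y hy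
          rcases Finset.mem_filter.1 hy with ⟨hyA, hy2 | hy2⟩
          · exact Finset.mem_union_left _ (Finset.mem_filter.2 ⟨hyA, hy2⟩)
          · exact Finset.mem_union_right _ (Finset.mem_filter.2 ⟨hyA, hy2⟩)
        have := Finset.card_le_card hsub
        have := Finset.card_union_le (A.filter (fun w => beats p w))
          (A.filter (fun w => beats s w))
        omega
      set W' := A.filter (fun w => ¬ (beats p w ∨ beats s w)) with hW'
      have hW4 : 4 ≤ W'.card := by omega
      have hW'A : W' ⊆ A := Finset.filter_subset _ _
      obtain ⟨w, hwW, -, hwbig⟩ := exists_max_out hT W' (Finset.card_pos.1 (by omega))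
      have hw2 : 2 ≤ (W'.filter (fun z => beats w z)).card := by omega
      obtain ⟨F, hFsub, hFcard⟩ := Finset.exists_subset_card_eq hw2
      have hFA : F ⊆ A := (hFsub.trans (Finset.filter_subset _ _)).trans hW'A
      have hbwF : ∀ f ∈ F, beats w f := fun f hf => (Finset.mem_filter.1 (hFsub hf)).2
      have hwF : w ∉ F := fun hh => irr w (hbwF w hh)
      have hwA : w ∈ A := hW'A hwW
      have hwnb := (Finset.mem_filter.1 hwW).2
      push_neg at hwnb
      have hwp : w ≠ p := fun hh => Finset.disjoint_left.1 hABd (hh ▸ hwA) hp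
      have hws : w ≠ s := fun hh => Finset.disjoint_left.1 hABd (hh ▸ hwA) hs
      have hbwp : beats w p := tot p w (Ne.symm hwp) hwnb.1
      have hbws : beats w s := tot s w (Ne.symm hws) hwnb.2
      refine appHubW hT haA haB hABd huniv hcard9 hbA w hwA p q hp hq hpq
        F hFA hwF (by omega) hbwp bpq ?_ hbwF
      intro z hz hz1 hz2
      rcases hall z hz with rfl | rfl | rfl
      · exact absurd rfl hz1
      · exact absurd rfl hz2
      · exact hbws
    by_cases b1 : beats u v <;> by_cases b2 : beats v t <;> by_cases b3 : beats u t
    · exact dom3 u v t huB hvB htB huv hut hvt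
        (fun z hz => by rcases hBall3 z hz with h | h | h <;> tauto) b1 b3 b2
    · exact cyc3 u v t huB hvB htB huv hut hvt
        (fun z hz => by rcases hBall3 z hz with h | h | h <;> tauto) b1 b2
        (tot u t hut b3)
    · exact dom3 u t v huB htB hvB hut huv hvt.symm
        (fun z hz => by rcases hBall3 z hz with h | h | h <;> tauto) b3 b1
        (tot v t hvt b2)
    · exact dom3 t u v htB huB hvB hut.symm hvt.symm huv
        (fun z hz => by rcases hBall3 z hz with h | h | h <;> tauto)
        (tot u t hut b3) (tot v t hvt b2) b1
    · exact dom3 v u t hvB huB htB huv.symm hvt hut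
        (fun z hz => by rcases hBall3 z hz with h | h | h <;> tauto)
        (tot u v huv b1) b2 b3
    · exact dom3 v t u hvB htB huB hvt huv.symm hut.symm
        (fun z hz => by rcases hBall3 z hz with h | h | h <;> tauto) b2
        (tot u v huv b1) (tot u t hut b3)
    · exact cyc3 u t v huB htB hvB hut huv hvt.symm
        (fun z hz => by rcases hBall3 z hz with h | h | h <;> tauto) b3
        (tot v t hvt b2) (tot u v huv b1)
    · exact dom3 t v u htB hvB huB hvt.symm hut.symm huv.symm
        (fun z hz => by rcases hBall3 z hz with h | h | h <;> tauto)
        (tot v t hvt b2) (tot u t hut b3) (tot u v huv b1)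
  · -- b = 4
    have hA5c : A.card = 5 := by omega
    by_cases hI : ∃ r ∈ B, ∀ z ∈ B, z ≠ r → beats r z
    · obtain ⟨r, hr, hdom⟩ := hI
      exact appI hT haA haB hABd huniv hcard9 hbA hbB r hr ∅ (Finset.empty_subset _)
        (by simp [hb]) hdom (by simp)
    by_cases hII : ∃ r ∈ B, ∃ x ∈ B, x ≠ r ∧ (∀ z ∈ B, z ≠ r → z ≠ x → beats r z) ∧
        1 ≤ (A.filter (fun w => beats r w)).card
    · obtain ⟨r, hr, x, hx, hxr, hsemi, hdeg⟩ := hII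
      obtain ⟨F, hFsub, hFcard⟩ := Finset.exists_subset_card_eq hdeg
      obtain ⟨e, heA, bex⟩ := hO1 x hx
      exact appII hT haA haB hABd huniv hcard9 hbA hbB r x hr hx (Ne.symm hxr) F
        (hFsub.trans (Finset.filter_subset _ _)) (by omega) hsemi
        (fun f hf => (Finset.mem_filter.1 (hFsub hf)).2) e heA bex
    push_neg at hI hII
    have outB_le2 : ∀ r ∈ B, (B.filter (fun z => beats r z)).card ≤ 2 := by
      intro r hr
      obtain ⟨z, hz, hzr, hnbz⟩ := hI r hr
      have hsub : B.filter (fun y => beats r y) ⊆ (B.erase r).erase z := by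
        intro y hy
        obtain ⟨hyB, hby⟩ := Finset.mem_filter.1 hy
        refine Finset.mem_erase.2 ⟨fun hh => hnbz (hh ▸ hby), Finset.mem_erase.2
          ⟨fun hh => irr r (hh ▸ hby), hyB⟩⟩
      have := Finset.card_le_card hsub
      rw [Finset.card_erase_of_mem (Finset.mem_erase.2 ⟨hzr, hz⟩),
        Finset.card_erase_of_mem hr, hb] at this
      omega
    have getsemi : ∀ r ∈ B, 2 ≤ (B.filter (fun z => beats r z)).card →
        ∃ x ∈ B, x ≠ r ∧ ∀ z ∈ B, z ≠ r → z ≠ x → beats r z := by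
      intro r hr h2
      obtain ⟨x, hx, hxr, hnbx⟩ := hI r hr
      refine ⟨x, hx, hxr, ?_⟩
      intro z hz hzr hzx
      by_contra hc
      have hsub : B.filter (fun y => beats r y) ⊆ ((B.erase r).erase x).erase z := by
        intro y hy
        obtain ⟨hyB, hby⟩ := Finset.mem_filter.1 hy
        refine Finset.mem_erase.2 ⟨fun hh => hc (hh ▸ hby), Finset.mem_erase.2
          ⟨fun hh => hnbx (hh ▸ hby), Finset.mem_erase.2
          ⟨fun hh => irr r (hh ▸ hby), hyB⟩⟩⟩
      have hle := Finset.card_le_card hsub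
      rw [Finset.card_erase_of_mem (Finset.mem_erase.2 ⟨hzx, Finset.mem_erase.2 ⟨hzr, hz⟩⟩),
        Finset.card_erase_of_mem (Finset.mem_erase.2 ⟨hxr, hx⟩),
        Finset.card_erase_of_mem hr, hb] at hle
      omega
    have dA_of : ∀ r ∈ B, 2 ≤ (B.filter (fun z => beats r z)).card → ∀ f ∈ A, beats f r := by
      intro r hr h2 f hf
      obtain ⟨x, hx, hxr, hsemi⟩ := getsemi r hr h2
      have hcard0 := hII r hr x hx hxr hsemi
      have hfr : f ≠ r := fun hh => Finset.disjoint_left.1 hABd (hh ▸ hf) hr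
      refine tot r f (Ne.symm hfr) (fun hc => ?_)
      have : f ∈ A.filter (fun w => beats r w) := Finset.mem_filter.2 ⟨hf, hc⟩
      have := Finset.card_pos.2 ⟨f, this⟩
      omega
    obtain ⟨r1, hr1, -, hr1big⟩ := exists_max_out hT B (Finset.card_pos.1 (by omega))
    have hout1 : 2 ≤ (B.filter (fun z => beats r1 z)).card := by omega
    have hr2ex : ∃ r2 ∈ B, r2 ≠ r1 ∧ 2 ≤ (B.filter (fun z => beats r2 z)).card := by
      by_contra hc
      push_neg at hc
      have hsum := two_mul_sum_out hT B
      rw [hb] at hsum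
      have hsplit := (Finset.add_sum_erase B
        (fun z => (B.filter (fun y => beats z y)).card) hr1).symm
      have hb1 : ∑ z ∈ B.erase r1, (B.filter (fun y => beats z y)).card ≤
          (B.erase r1).card * 1 := by
        refine Finset.sum_le_card_nsmul _ _ 1 ?_
        intro z hz
        have hzB := Finset.mem_of_mem_erase hz
        have hz1 := (Finset.mem_erase.1 hz).1
        have := hc z hzB hz1
        omega
      rw [Finset.card_erase_of_mem hr1, hb] at hb1
      have h1le := outB_le2 r1 hr1
      omega
    obtain ⟨r2, hr2, hr21, hout2⟩ := hr2ex
    have dA1 := dA_of r1 hr1 hout1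
    have dA2 := dA_of r2 hr2 hout2
    have hpaircard : ((B.erase r1).erase r2).card = 2 := by
      rw [Finset.card_erase_of_mem (Finset.mem_erase.2 ⟨hr21, hr2⟩),
        Finset.card_erase_of_mem hr1, hb]
    obtain ⟨s, t, hstne, hst2⟩ := Finset.card_eq_two.1 hpaircard
    have hsmem : s ∈ (B.erase r1).erase r2 := by rw [hst2]; simp
    have htmem : t ∈ (B.erase r1).erase r2 := by rw [hst2]; simp
    have hsB : s ∈ B := Finset.mem_of_mem_erase (Finset.mem_of_mem_erase hsmem)
    have htB : t ∈ B := Finset.mem_of_mem_erase (Finset.mem_of_mem_erase htmem)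
    have hsr2 : s ≠ r2 := (Finset.mem_erase.1 hsmem).1
    have hsr1 : s ≠ r1 := (Finset.mem_erase.1 (Finset.mem_of_mem_erase hsmem)).1
    have htr2 : t ≠ r2 := (Finset.mem_erase.1 htmem).1
    have htr1 : t ≠ r1 := (Finset.mem_erase.1 (Finset.mem_of_mem_erase htmem)).1
    have hall4 : ∀ z ∈ B, z = r1 ∨ z = r2 ∨ z = s ∨ z = t := by
      intro z hz
      by_cases h1 : z = r1
      · exact Or.inl h1
      by_cases h2 : z = r2
      · exact Or.inr (Or.inl h2)
      have : z ∈ (B.erase r1).erase r2 :=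
        Finset.mem_erase.2 ⟨h2, Finset.mem_erase.2 ⟨h1, hz⟩⟩
      rw [hst2] at this
      rcases Finset.mem_insert.1 this with h | h
      · exact Or.inr (Or.inr (Or.inl h))
      · exact Or.inr (Or.inr (Or.inr (Finset.mem_singleton.1 h)))
    have core : ∀ R1 R2 S T : W, R1 ∈ B → R2 ∈ B → S ∈ B → T ∈ B →
        R1 ≠ R2 → S ≠ R1 → S ≠ R2 → T ≠ R1 → T ≠ R2 → S ≠ T →
        (∀ z ∈ B, z = R1 ∨ z = R2 ∨ z = S ∨ z = T) →
        beats R1 R2 → beats S T →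
        (∀ f ∈ A, beats f R1) → (∀ f ∈ A, beats f R2) →
        HasKArySpanningTree beats 4 := by
      intro R1 R2 S T hR1 hR2 hS hTm h12 hS1 hS2 hT1 hT2 hST hall b12 bST dA1' dA2'
      obtain ⟨w1, hw1A, bw1S⟩ := hO1 S hS
      have happ : ∀ w' : W, w' ∈ A → beats w' S → ∀ f ∈ A, f ≠ w' → beats w' f →
          HasKArySpanningTree beats 4 := by
        intro w' hw'A bw'S f hfA hfw bwf
        refine appHubW hT haA haB hABd huniv hcard9 hbA w' hw'A S T hS hTm hST
          {f} (Finset.singleton_subset_iff.2 hfA)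
          (fun hh => hfw ((Finset.mem_singleton.1 hh).symm))
          (by rw [Finset.card_singleton, hb]) bw'S bST ?_
          (fun g hg => (Finset.mem_singleton.1 hg) ▸ bwf)
        intro z hz hz1 hz2
        rcases hall z hz with rfl | rfl | rfl | rfl
        · exact dA1' w' hw'A
        · exact dA2' w' hw'A
        · exact absurd rfl hz1
        · exact absurd rfl hz2
      by_cases hf : ∃ f ∈ A, f ≠ w1 ∧ beats w1 f
      · obtain ⟨f, hfA, hfw, bwf⟩ := hf
        exact happ w1 hw1A bw1S f hfA hfw bwf
      push_neg at hf
      have hbw1 : ∀ f ∈ A, f ≠ w1 → beats f w1 :=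
        fun f hf' hne => tot w1 f (Ne.symm hne) (hf f hf' hne)
      by_cases hw2 : ∃ w2 ∈ A, w2 ≠ w1 ∧ beats w2 S
      · obtain ⟨w2, hw2A, hw21, bw2S⟩ := hw2
        exact happ w2 hw2A bw2S w1 hw1A (Ne.symm hw21) (hbw1 w2 hw2A hw21)
      push_neg at hw2
      have hbSA : ∀ f ∈ A, f ≠ w1 → beats S f := by
        intro f hf' hne
        have hfS : f ≠ S := fun hh => Finset.disjoint_left.1 hABd (hh ▸ hf') hS
        exact tot f S hfS (hw2 f hf' hne)
      have hf0 : ∃ f0 ∈ A, f0 ≠ w1 := by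
        by_contra hc
        push_neg at hc
        have : A ⊆ {w1} := fun y hy => Finset.mem_singleton.2 (hc y hy)
        have := Finset.card_le_card this
        rw [Finset.card_singleton, hA5c] at this
        omega
      obtain ⟨f0, hf0A, hf0w⟩ := hf0
      have hSout : 1 ≤ (A.filter (fun w => beats S w)).card :=
        Finset.card_pos.2 ⟨f0, Finset.mem_filter.2 ⟨hf0A, hbSA f0 hf0A hf0w⟩⟩
      have bR1S : beats R1 S := by
        refine tot S R1 hS1 (fun hc => ?_)
        have hsemi : ∀ z ∈ B, z ≠ S → z ≠ R2 → beats S z := by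
          intro z hz h1 h2
          rcases hall z hz with rfl | rfl | rfl | rfl
          · exact hc
          · exact absurd rfl h2
          · exact absurd rfl h1
          · exact bST
        have := hII S hS R2 hR2 (Ne.symm hS2) hsemi
        omega
      have bR2S : beats R2 S := by
        refine tot S R2 hS2 (fun hc => ?_)
        have hsemi : ∀ z ∈ B, z ≠ S → z ≠ R1 → beats S z := by
          intro z hz h1 h2
          rcases hall z hz with rfl | rfl | rfl | rfl
          · exact absurd rfl h2
          · exact hc
          · exact absurd rfl h1
          · exact bST
        have := hII S hS R1 hR1 (Ne.symm hS1) hsemi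
        omega
      have bTR1 : beats T R1 := by
        obtain ⟨z, hz, hzr, hnbz⟩ := hI R1 hR1
        rcases hall z hz with h | h | h | h
        · exact absurd h hzr
        · rw [h] at hnbz; exact absurd b12 hnbz
        · rw [h] at hnbz; exact absurd bR1S hnbz
        · rw [h] at hnbz; exact tot R1 T (Ne.symm hT1) hnbz
      -- phase 2 with T
      obtain ⟨w1', hw1'A, bw1'T⟩ := hO1 T hTm
      have happ2 : ∀ w' : W, w' ∈ A → beats w' T → ∀ f ∈ A, f ≠ w' → beats w' f →
          HasKArySpanningTree beats 4 := by
        intro w' hw'A bw'T f hfA hfw bwf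
        refine appHubW hT haA haB hABd huniv hcard9 hbA w' hw'A R2 S hR2 hS
          (Ne.symm hS2) {f} (Finset.singleton_subset_iff.2 hfA)
          (fun hh => hfw ((Finset.mem_singleton.1 hh).symm))
          (by rw [Finset.card_singleton, hb]) (dA2' w' hw'A) bR2S ?_
          (fun g hg => (Finset.mem_singleton.1 hg) ▸ bwf)
        intro z hz hz1 hz2
        rcases hall z hz with rfl | rfl | rfl | rfl
        · exact dA1' w' hw'A
        · exact absurd rfl hz1
        · exact absurd rfl hz2
        · exact bw'T
      by_cases hf' : ∃ f ∈ A, f ≠ w1' ∧ beats w1' f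
      · obtain ⟨f, hfA, hfw, bwf⟩ := hf'
        exact happ2 w1' hw1'A bw1'T f hfA hfw bwf
      push_neg at hf'
      have hbw1' : ∀ f ∈ A, f ≠ w1' → beats f w1' :=
        fun f hfa hne => tot w1' f (Ne.symm hne) (hf' f hfa hne)
      by_cases hw2' : ∃ w2 ∈ A, w2 ≠ w1' ∧ beats w2 T
      · obtain ⟨w2, hw2A, hw21, bw2T⟩ := hw2'
        exact happ2 w2 hw2A bw2T w1' hw1'A (Ne.symm hw21) (hbw1' w2 hw2A hw21)
      push_neg at hw2'
      have hbTA : ∀ f ∈ A, f ≠ w1' → beats T f := by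
        intro f hfa hne
        have hfT : f ≠ T := fun hh => Finset.disjoint_left.1 hABd (hh ▸ hfa) hTm
        exact tot f T hfT (hw2' f hfa hne)
      exfalso
      have hTA : T ∉ A := Finset.disjoint_right.1 hABd hTm
      have hR1A : R1 ∉ A := Finset.disjoint_right.1 hABd hR1
      have hsub : insert a (insert R1 (A.erase w1')) ⊆
          Finset.univ.filter (fun z => beats T z) := by
        intro y hy
        refine Finset.mem_filter.2 ⟨Finset.mem_univ y, ?_⟩
        rcases Finset.mem_insert.1 hy with rfl | hy
        · exact hbB T hTm
        rcases Finset.mem_insert.1 hy with rfl | hy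
        · exact bTR1
        · exact hbTA y (Finset.mem_of_mem_erase hy) (Finset.mem_erase.1 hy).1
      have hc1 : (insert a (insert R1 (A.erase w1'))).card = 6 := by
        rw [Finset.card_insert_of_notMem, Finset.card_insert_of_notMem,
          Finset.card_erase_of_mem hw1'A, hA5c]
        · exact fun hh => hR1A (Finset.mem_of_mem_erase hh)
        · intro hh
          rcases Finset.mem_insert.1 hh with hh | hh
          · exact ((hBmem R1).1 hR1).2 hh.symm
          · exact haA (Finset.mem_of_mem_erase hh)
      have hle := Finset.card_le_card hsub
      have := hamax T (Finset.mem_univ T)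
      rw [hc1] at hle
      omega
    by_cases bR : beats r1 r2 <;> by_cases bS : beats s t
    · exact core r1 r2 s t hr1 hr2 hsB htB (Ne.symm hr21) hsr1 hsr2 htr1 htr2 hstne
        hall4 bR bS dA1 dA2
    · exact core r1 r2 t s hr1 hr2 htB hsB (Ne.symm hr21) htr1 htr2 hsr1 hsr2 hstne.symm
        (fun z hz => by rcases hall4 z hz with h | h | h | h <;> tauto) bR
        (tot s t hstne bS) dA1 dA2
    · exact core r2 r1 s t hr2 hr1 hsB htB hr21 hsr2 hsr1 htr2 htr1 hstne
        (fun z hz => by rcases hall4 z hz with h | h | h | h <;> tauto)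
        (tot r1 r2 (Ne.symm hr21) bR) bS dA2 dA1
    · exact core r2 r1 t s hr2 hr1 htB hsB hr21 htr2 htr1 hsr2 hsr1 hstne.symm
        (fun z hz => by rcases hall4 z hz with h | h | h | h <;> tauto)
        (tot r1 r2 (Ne.symm hr21) bR) (tot s t hstne bS) dA2 dA1
end

section
/- There exists a tournament T_12 on 12 vertices with no 5-ary spanning tree; consequently h(5) ≥ 13. Explicitly, T_12 has vertex set {0,...,11} and arc set {(0,3),(0,5),(0,9),(0,10),(0,11),(1,0),(1,4),(1,6),(1,8),(1,9),(1,11),(2,0),(2,1),(2,7),(2,8),(2,10),(2,11),(3,1),(3,2),(3,6),(3,9),(3,10),(4,0),(4,2),(4,3),(4,7),(4,9),(5,1),(5,2),(5,3),(5,4),(5,8),(5,11),(6,0),(6,2),(6,4),(6,5),(6,10),(7,0),(7,1),(7,3),(7,5),(7,6),(8,0),(8,3),(8,4),(8,6),(8,7),(9,2),(9,5),(9,6),(9,7),(9,8),(9,11),(10,1),(10,4),(10,5),(10,7),(10,8),(10,9),(11,3),(11,4),(11,6),(11,7),(11,8),(11,10)}. -/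
/-- The arc list of the explicit 12-vertex tournament `T₁₂`. -/
def T12arcs : List (Fin 12 × Fin 12) :=
  [(0,3),(0,5),(0,9),(0,10),(0,11),(1,0),(1,4),(1,6),(1,8),(1,9),(1,11),
   (2,0),(2,1),(2,7),(2,8),(2,10),(2,11),(3,1),(3,2),(3,6),(3,9),(3,10),
   (4,0),(4,2),(4,3),(4,7),(4,9),(5,1),(5,2),(5,3),(5,4),(5,8),(5,11),
   (6,0),(6,2),(6,4),(6,5),(6,10),(7,0),(7,1),(7,3),(7,5),(7,6),
   (8,0),(8,3),(8,4),(8,6),(8,7),(9,2),(9,5),(9,6),(9,7),(9,8),(9,11),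
   (10,1),(10,4),(10,5),(10,7),(10,8),(10,9),
   (11,3),(11,4),(11,6),(11,7),(11,8),(11,10)]

/-- The explicit 12-vertex tournament `T₁₂`. -/
def T12 (i j : Fin 12) : Prop := (i, j) ∈ T12arcs

instance : ∀ i j, Decidable (T12 i j) := fun i j => by unfold T12; infer_instance

theorem key : ∀ a b : Fin 12, a ≠ b →
    5 ≤ (Finset.univ.filter (fun w => T12 a w)).card →
    5 ≤ (Finset.univ.filter (fun w => T12 b w)).card →
    (Finset.univ.filter (fun w => T12 a w ∨ T12 b w)).card ≤ 9 := by decide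

theorem noTree : ¬ HasKArySpanningTree T12 5 := by
  rintro ⟨root, parent, hroot, hpar, hparroot, hbeats, hreach, e, he, hce, hother⟩
  classical
  set ch : Fin 12 → Finset (Fin 12) :=
    fun v => Finset.univ.filter (fun w => w ≠ root ∧ parent w = v) with hch
  have hce' : (ch e).card ≤ 5 := by
    convert hce using 3
  have hother' : ∀ v : Fin 12, v ≠ e → (ch v).card = 5 ∨ (ch v).card = 0 := by
    intro v hv
    have := hother v (Finset.mem_univ v) hv
    convert this using 4
  -- total number of children is 11
  have hsum : ∑ v : Fin 12, (ch v).card = 11 := by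
    have h1 : (Finset.univ.filter (fun w : Fin 12 => w ≠ root)).card
        = ∑ v : Fin 12, (ch v).card := by
      refine Finset.card_eq_sum_card_fiberwise (f := parent)
        (t := Finset.univ) ?_ |>.trans ?_
      · intro x _; exact Finset.mem_univ _
      · apply Finset.sum_congr rfl
        intro v _
        congr 1
        simp [hch, Finset.filter_filter]
    rw [← h1]
    rw [Finset.filter_ne']
    simp
  -- the set of full vertices other than e
  set A : Finset (Fin 12) :=
    Finset.univ.filter (fun v => v ≠ e ∧ (ch v).card = 5) with hA
  have heA : e ∉ A := by simp [hA]
  have hsum2 : (ch e).card + 5 * A.card = 11 := by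
    have hsub : insert e A ⊆ Finset.univ := Finset.subset_univ _
    have hz : ∀ v ∈ Finset.univ, v ∉ insert e A → (ch v).card = 0 := by
      intro v _ hv
      simp only [Finset.mem_insert, not_or] at hv
      rcases hother' v hv.1 with h | h
      · exact absurd (by simp [hA, hv.1, h]) hv.2
      · exact h
    have := Finset.sum_subset hsub hz
    rw [hsum] at this
    rw [Finset.sum_insert heA] at this
    have hA5 : ∑ v ∈ A, (ch v).card = 5 * A.card := by
      rw [Finset.sum_congr rfl (fun v hv => (Finset.mem_filter.mp hv).2.2)]
      simp [mul_comm]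
    omega
  have hAcard : A.card = 2 := by omega
  obtain ⟨a, b, hab, hAab⟩ := Finset.card_eq_two.mp hAcard
  have ha : (ch a).card = 5 := by
    have : a ∈ A := by rw [hAab]; simp
    exact (Finset.mem_filter.mp this).2.2
  have hb : (ch b).card = 5 := by
    have : b ∈ A := by rw [hAab]; simp
    exact (Finset.mem_filter.mp this).2.2
  -- children are out-neighbors
  have hsubN : ∀ v : Fin 12, ch v ⊆ Finset.univ.filter (fun w => T12 v w) := by
    intro v w hw
    simp only [hch, Finset.mem_filter] at hw ⊢
    refine ⟨Finset.mem_univ _, ?_⟩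
    have := hbeats w (Finset.mem_univ w) hw.2.1
    rwa [hw.2.2] at this
  have hdisj : Disjoint (ch a) (ch b) := by
    rw [Finset.disjoint_left]
    intro w hwa hwb
    simp only [hch, Finset.mem_filter] at hwa hwb
    exact hab (hwa.2.2 ▸ hwb.2.2.symm ▸ rfl)
  have hunion : ch a ∪ ch b ⊆ Finset.univ.filter (fun w => T12 a w ∨ T12 b w) := by
    intro w hw
    rcases Finset.mem_union.mp hw with h | h
    · have := hsubN a h; simp only [Finset.mem_filter] at this ⊢
      exact ⟨this.1, Or.inl this.2⟩
    · have := hsubN b h; simp only [Finset.mem_filter] at this ⊢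
      exact ⟨this.1, Or.inr this.2⟩
  have h10 : (ch a ∪ ch b).card = 10 := by
    rw [Finset.card_union_of_disjoint hdisj, ha, hb]
  have hda : 5 ≤ (Finset.univ.filter (fun w => T12 a w)).card :=
    ha ▸ Finset.card_le_card (hsubN a)
  have hdb : 5 ≤ (Finset.univ.filter (fun w => T12 b w)).card :=
    hb ▸ Finset.card_le_card (hsubN b)
  have := key a b hab hda hdb
  have := Finset.card_le_card hunion
  omega

/-- `T₁₂` is a tournament with no 5-ary spanning tree; consequently `h(5) ≥ 13`,
i.e. it is not the case that every tournament of order at least 12 has a 5-ary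
spanning tree. -/
theorem stmt15 :
    IsTournament T12 ∧ ¬ HasKArySpanningTree T12 5 ∧
    ¬ (∀ (W : Type) [Fintype W] [DecidableEq W], 12 ≤ Fintype.card W →
        ∀ beats : W → W → Prop, IsTournament beats →
          HasKArySpanningTree beats 5) := by
  refine ⟨⟨by decide, by decide⟩, noTree, ?_⟩
  intro h
  exact noTree (h (Fin 12) (by simp) T12 ⟨by decide, by decide⟩)
end

section
/- Suppose every tournament on n' vertices contains a 4-ary spanning tree for all 10 ≤ n' < n, and n ≥ 14. Then every tournament on n vertices contains a 4-ary spanning tree. (Induction step: pick a vertex v of out-degree at least 4 with out-neighbors a,b,c,d; remove {v,a,b,c}, take a 4-ary spanning tree of the remaining tournament, and attach the 4-star rooted at v.) -/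
open Finset

lemma exists_outdeg_ge {V : Type} [Fintype V] (beats : V → V → Prop)
    [inst : ∀ v w, Decidable (beats v w)]
    (ht : IsTournament beats) (hn : 14 ≤ Fintype.card V) :
    ∃ v, 4 ≤ (Finset.univ.filter (fun w => beats v w)).card := by
  classical
  by_contra h
  push_neg at h
  have key : ∀ v : V, (univ.filter (fun w => beats v w)).card
      + (univ.filter (fun w => beats w v)).card = Fintype.card V - 1 := by
    intro v
    rw [← Finset.card_union_of_disjoint]
    · have : univ.filter (fun w => beats v w) ∪ univ.filter (fun w => beats w v)
          = univ.erase v := by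
        ext w
        simp only [mem_union, mem_filter, mem_univ, true_and, mem_erase, and_true]
        constructor
        · rintro (h1 | h1) rfl <;> exact ht.1 _ h1
        · intro hw
          by_cases hb : beats v w
          · exact Or.inl hb
          · exact Or.inr (((ht.2 w v hw).mpr hb))
      rw [this, card_erase_of_mem (mem_univ v), card_univ]
    · rw [Finset.disjoint_filter]
      intro w _ h1 h2
      exact ((ht.2 v w (fun hq => ht.1 v (hq ▸ h1))).mp h1) h2
  have hswap : ∑ v : V, (univ.filter (fun w => beats v w)).card
      = ∑ v : V, (univ.filter (fun w => beats w v)).card := by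
    simp only [Finset.card_filter]
    exact Finset.sum_comm
  have hsum : ∑ v : V, ((univ.filter (fun w => beats v w)).card
      + (univ.filter (fun w => beats w v)).card) = Fintype.card V * (Fintype.card V - 1) := by
    rw [Finset.sum_congr rfl (fun v _ => key v), Finset.sum_const, card_univ, smul_eq_mul]
  rw [Finset.sum_add_distrib, ← hswap] at hsum
  have hle : ∑ v : V, (univ.filter (fun w => beats v w)).card ≤ 3 * Fintype.card V := by
    calc ∑ v : V, (univ.filter (fun w => beats v w)).card
        ≤ ∑ _v : V, 3 := Finset.sum_le_sum (fun v _ => Nat.lt_succ_iff.mp (h v))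
      _ = 3 * Fintype.card V := by rw [Finset.sum_const, card_univ, smul_eq_mul, mul_comm]
  have hbig : 13 * Fintype.card V ≤ Fintype.card V * (Fintype.card V - 1) := by
    rw [mul_comm 13]
    exact Nat.mul_le_mul_left _ (by omega)
  omega

lemma transfer {V : Type} [DecidableEq V] (beats : V → V → Prop) (k : ℕ)
    (S : Finset V) (root' : {x // x ∈ S}) (parent' : {x // x ∈ S} → {x // x ∈ S})
    (h : IsKAryTreeOn (fun a b => beats a.1 b.1) k Finset.univ root' parent') :
    IsKAryTreeOn beats k S root'.1
      (fun x => if hx : x ∈ S then (parent' ⟨x, hx⟩).1 else x) := by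
  classical
  obtain ⟨-, -, hroot, hbeats, hreach, e', -, he1, he2⟩ := h
  set p : V → V := fun x => if hx : x ∈ S then (parent' ⟨x, hx⟩).1 else x with hp
  have hpS : ∀ x (hx : x ∈ S), p x = (parent' ⟨x, hx⟩).1 := by
    intro x hx; simp [hp, hx]
  have hiter : ∀ (n : ℕ) (x : V) (hx : x ∈ S), p^[n] x = (parent'^[n] ⟨x, hx⟩).1 := by
    intro n
    induction n with
    | zero => intro x hx; simp
    | succ n ih =>
      intro x hx
      rw [Function.iterate_succ_apply, Function.iterate_succ_apply, hpS x hx]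
      exact ih _ (parent' ⟨x, hx⟩).2
  have hcard : ∀ (x : {a // a ∈ S}),
      (S.filter (fun w => w ≠ root'.1 ∧ p w = x.1)).card
      = (Finset.univ.filter (fun w' => w' ≠ root' ∧ parent' w' = x)).card := by
    intro x
    apply Finset.card_bij (fun (w : V) (hw : w ∈ S.filter _) =>
      (⟨w, (Finset.mem_filter.mp hw).1⟩ : {a // a ∈ S}))
    · intro w hw
      obtain ⟨hwS, hw1, hw2⟩ := Finset.mem_filter.mp hw
      rw [Finset.mem_filter]
      refine ⟨Finset.mem_univ _, ?_, ?_⟩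
      · intro hc; exact hw1 (congrArg Subtype.val hc)
      · apply Subtype.ext
        rw [← hpS w hwS]; exact hw2
    · intro a ha b hb hab
      exact congrArg Subtype.val hab
    · intro w' hw'
      obtain ⟨-, hw1, hw2⟩ := Finset.mem_filter.mp hw'
      refine ⟨w'.1, Finset.mem_filter.mpr ⟨w'.2, ?_, ?_⟩, by simp⟩
      · intro hc; exact hw1 (Subtype.ext hc)
      · rw [hpS w'.1 w'.2]
        simp only [Subtype.coe_eta]
        exact congrArg Subtype.val hw2
  refine ⟨root'.2, ?_, ?_, ?_, ?_, e'.1, e'.2, ?_, ?_⟩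
  · intro x hx; rw [hpS x hx]; exact (parent' ⟨x, hx⟩).2
  · rw [hpS root'.1 root'.2]
    simp only [Subtype.coe_eta]
    rw [hroot]
  · intro x hx hxr
    rw [hpS x hx]
    exact hbeats ⟨x, hx⟩ (Finset.mem_univ _) (fun hc => hxr (congrArg Subtype.val hc))
  · intro x hx
    obtain ⟨m, hm⟩ := hreach ⟨x, hx⟩ (Finset.mem_univ _)
    exact ⟨m, by rw [hiter m x hx, hm]⟩
  · rw [hcard e']; exact he1
  · intro x hx hxe
    rw [hcard ⟨x, hx⟩]
    exact he2 ⟨x, hx⟩ (Finset.mem_univ _) (fun hc => hxe (congrArg Subtype.val hc))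

def comb {V : Type} [DecidableEq V] (parent₀ : V → V) (v u pv : V) (B' : Finset V) :
    V → V :=
  fun x => if x = v then pv else if x ∈ B' then v else if x = u then v else parent₀ x

lemma comb_v {V : Type} [DecidableEq V] (parent₀ : V → V) (v u pv : V) (B' : Finset V) :
    comb parent₀ v u pv B' v = pv := by simp [comb]

lemma comb_B' {V : Type} [DecidableEq V] (parent₀ : V → V) (v u pv : V) (B' : Finset V)
    {b : V} (hb : b ∈ B') (hbv : b ≠ v) : comb parent₀ v u pv B' b = v := by
  simp [comb, hb, hbv]

lemma comb_u {V : Type} [DecidableEq V] (parent₀ : V → V) (v u pv : V) (B' : Finset V)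
    (huv : u ≠ v) (huB : u ∉ B') : comb parent₀ v u pv B' u = v := by
  simp [comb, huv, huB]

lemma comb_other {V : Type} [DecidableEq V] (parent₀ : V → V) (v u pv : V) (B' : Finset V)
    {x : V} (h1 : x ≠ v) (h2 : x ∉ B') (h3 : x ≠ u) :
    comb parent₀ v u pv B' x = parent₀ x := by simp [comb, h1, h2, h3]


lemma mem_of_cover {V : Type} {S₀ B' : Finset V} {v w : V}
    (hcover : ∀ x : V, x ∈ S₀ ∨ x = v ∨ x ∈ B')
    (h1 : w ≠ v) (h2 : w ∉ B') : w ∈ S₀ := by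
  rcases hcover w with h | h | h
  · exact h
  · exact absurd h h1
  · exact absurd h h2

lemma combine1 {V : Type} [Fintype V] [DecidableEq V] (beats : V → V → Prop)
    (S₀ B' : Finset V) (v u : V)
    (hvS : v ∉ S₀) (hB'S : ∀ b ∈ B', b ∉ S₀) (hvB' : v ∉ B') (hB3 : B'.card = 3)
    (hbB : ∀ b ∈ B', beats v b)
    (hcover : ∀ x : V, x ∈ S₀ ∨ x = v ∨ x ∈ B')
    (hvu : beats v u)
    (parent₀ : V → V) (htree : IsKAryTreeOn beats 4 S₀ u parent₀) :
    HasKArySpanningTree beats 4 := by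
  classical
  obtain ⟨huS, hpar, hpru, hbt, hreach, e, heS, he1, he2⟩ := htree
  have hune : u ≠ v := fun h => hvS (h ▸ huS)
  have huB' : u ∉ B' := fun h => hB'S u h huS
  set p := comb parent₀ v u v B' with hpdef
  have hp_v : p v = v := comb_v ..
  have hp_u : p u = v := comb_u _ _ _ _ _ hune huB'
  have hp_b : ∀ b ∈ B', p b = v := fun b hb =>
    comb_B' _ _ _ _ _ hb (fun h => hvB' (h ▸ hb))
  have hp_o : ∀ x ∈ S₀, x ≠ u → p x = parent₀ x := fun x hx hxu =>
    comb_other _ _ _ _ _ (fun h => hvS (h ▸ hx)) (fun h => hB'S x h hx) hxu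
  -- L1 : children sets inside S₀ unchanged
  have L1 : ∀ x ∈ S₀, Finset.univ.filter (fun w => w ≠ v ∧ p w = x)
      = S₀.filter (fun w => w ≠ u ∧ parent₀ w = x) := by
    intro x hx
    ext w
    simp only [mem_filter, mem_univ, true_and]
    constructor
    · rintro ⟨hwv, hwp⟩
      by_cases hwB : w ∈ B'
      · rw [hp_b w hwB] at hwp; exact absurd (hwp ▸ hx) hvS
      by_cases hwu : w = u
      · rw [hwu, hp_u] at hwp; exact absurd (hwp ▸ hx) hvS
      have hwS : w ∈ S₀ := mem_of_cover hcover hwv hwB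
      exact ⟨hwS, hwu, by rw [← hp_o w hwS hwu]; exact hwp⟩
    · rintro ⟨hwS, hwu, hwp⟩
      exact ⟨fun h => hvS (h ▸ hwS), by rw [hp_o w hwS hwu]; exact hwp⟩
  -- L2 : children of v
  have L2 : Finset.univ.filter (fun w => w ≠ v ∧ p w = v) = insert u B' := by
    ext w
    simp only [mem_filter, mem_univ, true_and, mem_insert]
    constructor
    · rintro ⟨hwv, hwp⟩
      by_cases hwB : w ∈ B'
      · exact Or.inr hwB
      by_cases hwu : w = u
      · exact Or.inl hwu
      have hwS : w ∈ S₀ := mem_of_cover hcover hwv hwB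
      rw [hp_o w hwS hwu] at hwp
      exact absurd (hwp ▸ hpar w hwS) hvS
    · rintro (rfl | hwB)
      · exact ⟨hune, hp_u⟩
      · exact ⟨fun h => hvB' (h ▸ hwB), hp_b w hwB⟩
  -- L3 : members of B' have no children
  have L3 : ∀ x ∈ B', Finset.univ.filter (fun w => w ≠ v ∧ p w = x) = ∅ := by
    intro x hxB
    ext w
    simp only [mem_filter, mem_univ, true_and, notMem_empty, iff_false, not_and]
    intro hwv hwp
    by_cases hwB : w ∈ B'
    · rw [hp_b w hwB] at hwp; exact hvB' (hwp ▸ hxB)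
    by_cases hwu : w = u
    · rw [hwu, hp_u] at hwp; exact hvB' (hwp ▸ hxB)
    have hwS : w ∈ S₀ := mem_of_cover hcover hwv hwB
    rw [hp_o w hwS hwu] at hwp
    exact hB'S x hxB (hwp ▸ hpar w hwS)
  -- reachability helper
  have aux : ∀ (m : ℕ) (x : V), x ∈ S₀ → parent₀^[m] x = u → ∃ t, p^[t] x = v := by
    intro m
    induction m with
    | zero =>
      intro x hx h0
      simp only [Function.iterate_zero, id_eq] at h0
      exact ⟨1, by simp [h0, hp_u]⟩
    | succ m ih =>
      intro x hx hsm
      by_cases hxu : x = u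
      · exact ⟨1, by simp [hxu, hp_u]⟩
      · obtain ⟨t, htt⟩ := ih (parent₀ x) (hpar x hx)
          (by rwa [Function.iterate_succ_apply] at hsm)
        exact ⟨t + 1, by rw [Function.iterate_succ_apply, hp_o x hx hxu]; exact htt⟩
  refine ⟨v, p, mem_univ v, fun x _ => mem_univ _, hp_v, ?_, ?_, e, mem_univ e, ?_, ?_⟩
  · -- arcs
    intro x _ hxv
    rcases hcover x with hxS | rfl | hxB
    · by_cases hxu : x = u
      · rw [hxu, hp_u]; exact hxu ▸ hvu
      · rw [hp_o x hxS hxu]; exact hbt x hxS hxu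
    · exact absurd rfl hxv
    · rw [hp_b x hxB]; exact hbB x hxB
  · -- reachability
    intro x _
    rcases hcover x with hxS | rfl | hxB
    · exact aux _ x hxS (hreach x hxS).choose_spec
    · exact ⟨0, rfl⟩
    · exact ⟨1, by simp [hp_b x hxB]⟩
  · rw [L1 e heS]; exact he1
  · intro x _ hxe
    rcases hcover x with hxS | rfl | hxB
    · rw [L1 x hxS]; exact he2 x hxS hxe
    · left; rw [L2, card_insert_of_notMem huB', hB3]
    · right; rw [L3 x hxB, card_empty]

lemma combine2 {V : Type} [Fintype V] [DecidableEq V] (beats : V → V → Prop)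
    (S₀ B' : Finset V) (v u root₀ : V)
    (hvS : v ∉ S₀) (hB'S : ∀ b ∈ B', b ∉ S₀) (hvB' : v ∉ B') (hB3 : B'.card = 3)
    (hbB : ∀ b ∈ B', beats v b)
    (hcover : ∀ x : V, x ∈ S₀ ∨ x = v ∨ x ∈ B')
    (hvu : beats v u) (huS : u ∈ S₀) (hur : u ≠ root₀)
    (parent₀ : V → V) (hqv : beats (parent₀ u) v)
    (htree : IsKAryTreeOn beats 4 S₀ root₀ parent₀) :
    HasKArySpanningTree beats 4 := by
  classical
  obtain ⟨hrS, hpar, hpru, hbt, hreach, e, heS, he1, he2⟩ := htree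
  set q := parent₀ u with hqdef
  have hqS : q ∈ S₀ := hpar u huS
  have hune : u ≠ v := fun h => hvS (h ▸ huS)
  have huB' : u ∉ B' := fun h => hB'S u h huS
  have hrv : root₀ ≠ v := fun h => hvS (h ▸ hrS)
  have hrB' : root₀ ∉ B' := fun h => hB'S _ h hrS
  have hqv' : q ≠ v := fun h => hvS (h ▸ hqS)
  set p := comb parent₀ v u q B' with hpdef
  have hp_v : p v = q := comb_v ..
  have hp_u : p u = v := comb_u _ _ _ _ _ hune huB'
  have hp_b : ∀ b ∈ B', p b = v := fun b hb =>
    comb_B' _ _ _ _ _ hb (fun h => hvB' (h ▸ hb))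
  have hp_o : ∀ x ∈ S₀, x ≠ u → p x = parent₀ x := fun x hx hxu =>
    comb_other _ _ _ _ _ (fun h => hvS (h ▸ hx)) (fun h => hB'S x h hx) hxu
  -- L1 : counts inside S₀ unchanged
  have L1 : ∀ x ∈ S₀, (Finset.univ.filter (fun w => w ≠ root₀ ∧ p w = x)).card
      = (S₀.filter (fun w => w ≠ root₀ ∧ parent₀ w = x)).card := by
    intro x hx
    by_cases hxq : x = q
    · have hu_in : u ∈ S₀.filter (fun w => w ≠ root₀ ∧ parent₀ w = x) :=
        mem_filter.mpr ⟨huS, hur, hxq.symm⟩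
      have hset : Finset.univ.filter (fun w => w ≠ root₀ ∧ p w = x)
          = insert v ((S₀.filter (fun w => w ≠ root₀ ∧ parent₀ w = x)).erase u) := by
        ext w
        simp only [mem_filter, mem_univ, true_and, mem_insert, mem_erase]
        constructor
        · rintro ⟨hwr, hwp⟩
          by_cases hwv : w = v
          · exact Or.inl hwv
          by_cases hwB : w ∈ B'
          · rw [hp_b w hwB] at hwp; exact absurd (hwp ▸ hx) hvS
          by_cases hwu : w = u
          · rw [hwu, hp_u] at hwp; exact absurd (hwp ▸ hx) hvS
          have hwS : w ∈ S₀ := mem_of_cover hcover hwv hwB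
          rw [hp_o w hwS hwu] at hwp
          exact Or.inr ⟨hwu, hwS, hwr, hwp⟩
        · rintro (rfl | ⟨hwu, hwS, hwr, hwp⟩)
          · exact ⟨fun h => hrv h.symm, by rw [hp_v]; exact hxq.symm⟩
          · exact ⟨hwr, by rw [hp_o w hwS hwu]; exact hwp⟩
      have hvnot : v ∉ (S₀.filter (fun w => w ≠ root₀ ∧ parent₀ w = x)).erase u := by
        intro h
        exact hvS (mem_filter.mp (mem_of_mem_erase h)).1
      have hpos : 0 < (S₀.filter (fun w => w ≠ root₀ ∧ parent₀ w = x)).card :=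
        card_pos.mpr ⟨u, hu_in⟩
      rw [hset, card_insert_of_notMem hvnot, card_erase_of_mem hu_in]
      omega
    · have hset : Finset.univ.filter (fun w => w ≠ root₀ ∧ p w = x)
          = S₀.filter (fun w => w ≠ root₀ ∧ parent₀ w = x) := by
        ext w
        simp only [mem_filter, mem_univ, true_and]
        constructor
        · rintro ⟨hwr, hwp⟩
          by_cases hwv : w = v
          · rw [hwv, hp_v] at hwp; exact absurd hwp.symm hxq
          by_cases hwB : w ∈ B'
          · rw [hp_b w hwB] at hwp; exact absurd (hwp ▸ hx) hvS
          by_cases hwu : w = u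
          · rw [hwu, hp_u] at hwp; exact absurd (hwp ▸ hx) hvS
          have hwS : w ∈ S₀ := mem_of_cover hcover hwv hwB
          rw [hp_o w hwS hwu] at hwp
          exact ⟨hwS, hwr, hwp⟩
        · rintro ⟨hwS, hwr, hwp⟩
          have hwu : w ≠ u := by
            intro h
            exact hxq (by rw [← hwp, h])
          exact ⟨hwr, by rw [hp_o w hwS hwu]; exact hwp⟩
      rw [hset]
  -- L2 : children of v
  have L2 : Finset.univ.filter (fun w => w ≠ root₀ ∧ p w = v) = insert u B' := by
    ext w
    simp only [mem_filter, mem_univ, true_and, mem_insert]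
    constructor
    · rintro ⟨hwr, hwp⟩
      by_cases hwv : w = v
      · rw [hwv, hp_v] at hwp; exact absurd hwp hqv'
      by_cases hwB : w ∈ B'
      · exact Or.inr hwB
      by_cases hwu : w = u
      · exact Or.inl hwu
      have hwS : w ∈ S₀ := mem_of_cover hcover hwv hwB
      rw [hp_o w hwS hwu] at hwp
      exact absurd (hwp ▸ hpar w hwS) hvS
    · rintro (rfl | hwB)
      · exact ⟨hur, hp_u⟩
      · exact ⟨fun h => hB'S w hwB (h ▸ hrS), hp_b w hwB⟩
  -- L3 : members of B' have no children
  have L3 : ∀ x ∈ B', Finset.univ.filter (fun w => w ≠ root₀ ∧ p w = x) = ∅ := by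
    intro x hxB
    ext w
    simp only [mem_filter, mem_univ, true_and, notMem_empty, iff_false, not_and]
    intro hwr hwp
    by_cases hwv : w = v
    · rw [hwv, hp_v] at hwp; exact hB'S x hxB (hwp ▸ hqS)
    by_cases hwB : w ∈ B'
    · rw [hp_b w hwB] at hwp; exact hvB' (hwp ▸ hxB)
    by_cases hwu : w = u
    · rw [hwu, hp_u] at hwp; exact hvB' (hwp ▸ hxB)
    have hwS : w ∈ S₀ := mem_of_cover hcover hwv hwB
    rw [hp_o w hwS hwu] at hwp
    exact hB'S x hxB (hwp ▸ hpar w hwS)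
  -- reachability helper
  have aux : ∀ (m : ℕ) (x : V), x ∈ S₀ → parent₀^[m] x = root₀ →
      ∃ t, p^[t] x = root₀ := by
    intro m
    induction m with
    | zero =>
      intro x hx h0
      simp only [Function.iterate_zero, id_eq] at h0
      exact ⟨0, h0⟩
    | succ m ih =>
      intro x hx hsm
      by_cases hxr : x = root₀
      · exact ⟨0, hxr⟩
      by_cases hxu : x = u
      · obtain ⟨t, htt⟩ := ih (parent₀ x) (hpar x hx)
          (by rwa [Function.iterate_succ_apply] at hsm)
        refine ⟨t + 2, ?_⟩
        rw [Function.iterate_succ_apply, Function.iterate_succ_apply, hxu, hp_u, hp_v]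
        rw [hxu] at htt
        exact htt
      · obtain ⟨t, htt⟩ := ih (parent₀ x) (hpar x hx)
          (by rwa [Function.iterate_succ_apply] at hsm)
        exact ⟨t + 1, by rw [Function.iterate_succ_apply, hp_o x hx hxu]; exact htt⟩
  have hreach_v : ∃ t, p^[t] v = root₀ := by
    obtain ⟨t, htt⟩ := aux _ q hqS (hreach q hqS).choose_spec
    exact ⟨t + 1, by rw [Function.iterate_succ_apply, hp_v]; exact htt⟩
  refine ⟨root₀, p, mem_univ root₀, fun x _ => mem_univ _, ?_, ?_, ?_, e, mem_univ e,
    ?_, ?_⟩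
  · rw [hp_o root₀ hrS (Ne.symm hur)]; exact hpru
  · -- arcs
    intro x _ hxr
    rcases hcover x with hxS | rfl | hxB
    · by_cases hxu : x = u
      · rw [hxu, hp_u]; exact hxu ▸ hvu
      · rw [hp_o x hxS hxu]; exact hbt x hxS hxr
    · rw [hp_v]; exact hqv
    · rw [hp_b x hxB]; exact hbB x hxB
  · -- reachability
    intro x _
    rcases hcover x with hxS | rfl | hxB
    · exact aux _ x hxS (hreach x hxS).choose_spec
    · exact hreach_v
    · obtain ⟨t, htt⟩ := hreach_v
      exact ⟨t + 1, by rw [Function.iterate_succ_apply, hp_b x hxB]; exact htt⟩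
  · rw [L1 e heS]; exact he1
  · intro x _ hxe
    rcases hcover x with hxS | rfl | hxB
    · rw [L1 x hxS]; exact he2 x hxS hxe
    · left; rw [L2, card_insert_of_notMem huB', hB3]
    · right; rw [L3 x hxB, card_empty]

/-- Induction step: if every tournament on `n'` vertices with `10 ≤ n' < n` has
a 4-ary spanning tree and `n ≥ 14`, then every tournament on `n` vertices has a
4-ary spanning tree. -/

theorem stmt17 (n : ℕ) (hn : 14 ≤ n)
    (IH : ∀ (W : Type) [Fintype W] [DecidableEq W],
      10 ≤ Fintype.card W → Fintype.card W < n →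
      ∀ beats : W → W → Prop, IsTournament beats →
        HasKArySpanningTree beats 4) :
    ∀ (W : Type) [Fintype W] [DecidableEq W], Fintype.card W = n →
      ∀ beats : W → W → Prop, IsTournament beats →
        HasKArySpanningTree beats 4 := by
  intro W _ _ hcard beats ht
  classical
  obtain ⟨v, hv4⟩ := exists_outdeg_ge beats ht (by omega)
  obtain ⟨B, hBsub, hBcard⟩ := Finset.exists_subset_card_eq hv4
  have hBbeats : ∀ b ∈ B, beats v b := fun b hb => (mem_filter.mp (hBsub hb)).2
  have hvB : v ∉ B := fun h => ht.1 v (hBbeats v h)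
  obtain ⟨d, hdB⟩ := Finset.card_pos.mp (show 0 < B.card by rw [hBcard]; norm_num)
  set B' := B.erase d with hB'def
  have hB'sub : B' ⊆ B := erase_subset d B
  have hB'card : B'.card = 3 := by rw [hB'def, card_erase_of_mem hdB, hBcard]
  have hvB' : v ∉ B' := fun h => hvB (hB'sub h)
  set A := insert v B' with hA
  have hAcard : A.card = 4 := by rw [hA, card_insert_of_notMem hvB', hB'card]
  set S₀ := Aᶜ with hS₀
  have hvS : v ∉ S₀ := by
    rw [hS₀, mem_compl, not_not, hA]
    exact mem_insert_self v B'
  have hB'S : ∀ b ∈ B', b ∉ S₀ := by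
    intro b hb
    rw [hS₀, mem_compl, not_not, hA]
    exact mem_insert_of_mem hb
  have hcover : ∀ x : W, x ∈ S₀ ∨ x = v ∨ x ∈ B' := by
    intro x
    by_cases hxA : x ∈ A
    · rw [hA, mem_insert] at hxA
      exact Or.inr hxA
    · exact Or.inl (mem_compl.mpr hxA)
  have hdv : d ≠ v := fun h => ht.1 v (h ▸ hBbeats d hdB)
  have hdS : d ∈ S₀ := by
    rw [hS₀, mem_compl, hA, mem_insert]
    rintro (h | h)
    · exact hdv h
    · exact (notMem_erase d B) h
  have hS₀card : S₀.card = n - 4 := by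
    rw [hS₀, card_compl, hAcard, hcard]
  -- apply IH to the subtype
  have hcardsub : Fintype.card {x // x ∈ S₀} = n - 4 := by
    rw [Fintype.card_coe]; exact hS₀card
  have htour' : IsTournament (fun (a b : {x // x ∈ S₀}) => beats a.1 b.1) :=
    ⟨fun a h => ht.1 a.1 h, fun a b hab => ht.2 a.1 b.1 (fun h => hab (Subtype.ext h))⟩
  obtain ⟨root', parent', htree'⟩ := IH {x // x ∈ S₀} (by omega) (by omega) _ htour'
  have htree₀ := transfer beats 4 S₀ root' parent' htree'
  set parent₀ : W → W := fun x => if hx : x ∈ S₀ then (parent' ⟨x, hx⟩).1 else x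
    with hp₀def
  set root₀ := root'.1 with hr₀def
  -- choose u of minimal depth among vertices of S₀ beaten by v
  set dep : W → ℕ := fun x =>
    if h : ∃ m, parent₀^[m] x = root₀ then Nat.find h else 0 with hdepdef
  have hdBad : d ∈ S₀.filter (fun x => beats v x) :=
    mem_filter.mpr ⟨hdS, hBbeats d hdB⟩
  obtain ⟨u, huBad, humin⟩ :=
    Finset.exists_min_image (S₀.filter (fun x => beats v x)) dep ⟨d, hdBad⟩
  have huS : u ∈ S₀ := (mem_filter.mp huBad).1
  have hvu : beats v u := (mem_filter.mp huBad).2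
  have hB'beats : ∀ b ∈ B', beats v b := fun b hb => hBbeats b (hB'sub hb)
  by_cases hurr : u = root₀
  · exact combine1 beats S₀ B' v u hvS hB'S hvB' hB'card hB'beats hcover hvu parent₀
      (by rw [hurr]; exact htree₀)
  · have hqS : parent₀ u ∈ S₀ := htree₀.2.1 u huS
    have hqv' : parent₀ u ≠ v := fun h => hvS (h ▸ hqS)
    have hq : beats (parent₀ u) v := by
      by_cases hbvq : beats v (parent₀ u)
      · exfalso
        have hqBad : parent₀ u ∈ S₀.filter (fun x => beats v x) :=
          mem_filter.mpr ⟨hqS, hbvq⟩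
        have hle := humin (parent₀ u) hqBad
        have hexu : ∃ m, parent₀^[m] u = root₀ := htree₀.2.2.2.2.1 u huS
        have hexq : ∃ m, parent₀^[m] (parent₀ u) = root₀ := by
          obtain ⟨m, hm⟩ := hexu
          cases m with
          | zero => exact absurd hm hurr
          | succ m => exact ⟨m, by rwa [Function.iterate_succ_apply] at hm⟩
        have hu0 : Nat.find hexu ≠ 0 := by
          intro h0
          have := Nat.find_spec hexu
          rw [h0] at this
          exact hurr this
        have hstep : parent₀^[Nat.find hexu - 1] (parent₀ u) = root₀ := by
          have hs := Nat.find_spec hexu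
          rw [show Nat.find hexu = (Nat.find hexu - 1) + 1 by omega,
            Function.iterate_succ_apply] at hs
          exact hs
        have hfind : Nat.find hexq ≤ Nat.find hexu - 1 := Nat.find_min' hexq hstep
        have hdepu : dep u = Nat.find hexu := by
          rw [hdepdef]; exact dif_pos hexu
        have hdepq : dep (parent₀ u) = Nat.find hexq := by
          rw [hdepdef]; exact dif_pos hexq
        rw [hdepu, hdepq] at hle
        omega
      · exact (ht.2 (parent₀ u) v hqv').mpr hbvq
    exact combine2 beats S₀ B' v u root₀ hvS hB'S hvB' hB'card hB'beats hcover hvu huS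
      hurr parent₀ hq htree₀
end

section
/- If for every n there exists a tournament on n vertices with domination number greater than c·log n (for some constant c > 0), then h(k) = Ω(k log k); that is, there exists a constant c' > 0 such that for all sufficiently large k there is a tournament on more than c'·k·log k vertices with no k-ary spanning tree. -/
/-- The domination number of a tournament: the minimum size of a set `X` such
that every vertex outside `X` is beaten by some member of `X`. -/
noncomputable def domNumber {V : Type*} [Fintype V] (beats : V → V → Prop) : ℕ :=
  sInf {m : ℕ | ∃ X : Finset V, X.card = m ∧ ∀ v : V, v ∉ X → ∃ u ∈ X, beats u v}

lemma key_s19 {n : ℕ} (beats : Fin n → Fin n → Prop) (k : ℕ)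
    (h : HasKArySpanningTree beats k) :
    ∃ m : ℕ, domNumber beats ≤ m + 2 ∧ m * k ≤ n - 1 := by
  classical
  obtain ⟨root, parent, hroot, hparS, hproot, hbeat, hreach, e, heS, hek, hall⟩ := h
  set C : Fin n → Finset (Fin n) :=
    fun v => Finset.univ.filter (fun w => w ≠ root ∧ parent w = v) with hC
  set NL : Finset (Fin n) := Finset.univ.filter (fun v => (C v).card ≠ 0) with hNL
  refine ⟨(NL.erase e).card, ?_, ?_⟩
  · -- domination bound
    have hdom : ∀ v : Fin n, v ∉ insert root NL → ∃ u ∈ insert root NL, beats u v := by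
      intro v hv
      have hvr : v ≠ root := by rintro rfl; exact hv (Finset.mem_insert_self _ _)
      refine ⟨parent v, ?_, hbeat v (Finset.mem_univ v) hvr⟩
      refine Finset.mem_insert_of_mem ?_
      rw [hNL, Finset.mem_filter]
      refine ⟨Finset.mem_univ _, Finset.card_ne_zero_of_mem (a := v) ?_⟩
      rw [hC]; simp [hvr]
    have h1 : domNumber beats ≤ (insert root NL).card :=
      Nat.sInf_le ⟨insert root NL, rfl, hdom⟩
    have h2 : (insert root NL).card ≤ NL.card + 1 := Finset.card_insert_le _ _
    have h3 : NL.card ≤ (NL.erase e).card + 1 := by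
      have : NL ⊆ insert e (NL.erase e) := Finset.subset_insert_iff.mpr (le_refl _)
      calc NL.card ≤ (insert e (NL.erase e)).card := Finset.card_le_card this
        _ ≤ (NL.erase e).card + 1 := Finset.card_insert_le _ _
    omega
  · -- counting bound
    have hdisj : ∀ x ∈ (Finset.univ : Finset (Fin n)), ∀ y ∈ (Finset.univ : Finset (Fin n)),
        x ≠ y → Disjoint (C x) (C y) := by
      intro x _ y _ hxy
      rw [Finset.disjoint_left]
      intro w hwx hwy
      rw [hC, Finset.mem_filter] at hwx hwy
      exact hxy (hwx.2.2 ▸ hwy.2.2)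
    have hbu : Finset.univ.biUnion C = Finset.univ.erase root := by
      ext w
      constructor
      · intro hw
        obtain ⟨v, -, hwv⟩ := Finset.mem_biUnion.mp hw
        rw [hC] at hwv
        exact Finset.mem_erase.mpr ⟨(Finset.mem_filter.mp hwv).2.1, Finset.mem_univ _⟩
      · intro hw
        refine Finset.mem_biUnion.mpr ⟨parent w, Finset.mem_univ _, ?_⟩
        rw [hC]
        exact Finset.mem_filter.mpr ⟨Finset.mem_univ _, (Finset.mem_erase.mp hw).1, rfl⟩
    have hsum : ∑ v ∈ Finset.univ, (C v).card = n - 1 := by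
      rw [← Finset.card_biUnion hdisj, hbu, Finset.card_erase_of_mem (Finset.mem_univ _)]
      simp
    have hsub : ∑ v ∈ NL.erase e, (C v).card ≤ ∑ v ∈ Finset.univ, (C v).card :=
      Finset.sum_le_sum_of_subset (Finset.subset_univ _)
    have heq : ∑ v ∈ NL.erase e, (C v).card = (NL.erase e).card * k := by
      rw [Finset.sum_congr rfl (fun v hv => ?_), Finset.sum_const, smul_eq_mul]
      have hvne : v ≠ e := (Finset.mem_erase.mp hv).1
      have hvNL : v ∈ NL := (Finset.mem_erase.mp hv).2
      rw [hNL, Finset.mem_filter] at hvNL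
      rcases hall v (Finset.mem_univ _) hvne with hk' | h0
      · exact hk'
      · exact absurd h0 hvNL.2
    omega

/-- If for every `n ≥ 1` there is an `n`-vertex tournament of domination number
greater than `c·log n`, then `h(k) = Ω(k log k)`: there is `c' > 0` such that
for all sufficiently large `k` some tournament on more than `c'·k·log k`
vertices has no `k`-ary spanning tree. -/
theorem stmt19
    (H : ∃ c : ℝ, 0 < c ∧ ∀ n : ℕ, 1 ≤ n →
      ∃ beats : Fin n → Fin n → Prop, IsTournament beats ∧
        c * Real.log n < (domNumber beats : ℝ)) :
    ∃ c' : ℝ, 0 < c' ∧ ∃ K : ℕ, ∀ k : ℕ, K ≤ k →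
      ∃ (n : ℕ) (beats : Fin n → Fin n → Prop), IsTournament beats ∧
        c' * k * Real.log k < (n : ℝ) ∧ ¬ HasKArySpanningTree beats k := by
  obtain ⟨c, hc, H⟩ := H
  refine ⟨c / 4, by positivity, max 2 ⌈Real.exp (4 / c)⌉₊, fun k hk => ?_⟩
  have hk2 : 2 ≤ k := le_trans (le_max_left _ _) hk
  have hk1 : (1 : ℝ) < k := by exact_mod_cast Nat.lt_of_lt_of_le one_lt_two hk2
  have hkexp : Real.exp (4 / c) ≤ (k : ℝ) := by
    have h1 : (⌈Real.exp (4 / c)⌉₊ : ℝ) ≤ (k : ℝ) := by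
      exact_mod_cast le_trans (le_max_right _ _) hk
    exact le_trans (Nat.le_ceil _) h1
  have hlogk : 4 / c ≤ Real.log k := by
    rw [← Real.log_exp (4 / c)]
    exact Real.log_le_log (Real.exp_pos _) hkexp
  have hlogk_pos : 0 < Real.log k := Real.log_pos hk1
  have hkpos : (0 : ℝ) < k := lt_trans one_pos hk1
  set x : ℝ := c / 2 * (k * Real.log k) with hx
  have hxpos : 0 < x := by positivity
  set n : ℕ := ⌈x⌉₊ with hn
  have hx_le_n : x ≤ n := Nat.le_ceil x
  have hn_lt : (n : ℝ) < x + 1 := Nat.ceil_lt_add_one hxpos.le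
  have hkn : (k : ℝ) ≤ n := by
    have h2 : (2 : ℝ) ≤ c / 2 * Real.log k := by
      have := mul_le_mul_of_nonneg_left hlogk (by positivity : (0:ℝ) ≤ c / 2)
      calc (2 : ℝ) = c / 2 * (4 / c) := by field_simp; ring
        _ ≤ c / 2 * Real.log k := this
    calc (k : ℝ) = 1 * k := (one_mul _).symm
      _ ≤ (c / 2 * Real.log k) * k := by nlinarith
      _ = x := by rw [hx]; ring
      _ ≤ n := hx_le_n
  have hknat : k ≤ n := by exact_mod_cast hkn
  have hn1 : 1 ≤ n := le_trans (le_trans one_le_two hk2) hknat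
  obtain ⟨beats, hT, hdom⟩ := H n hn1
  refine ⟨n, beats, hT, ?_, ?_⟩
  · have : c / 4 * k * Real.log k < x := by
      rw [hx]
      have hkl : (0 : ℝ) < k * Real.log k := by positivity
      nlinarith
    linarith
  · intro hspan
    obtain ⟨m, hd, hmk⟩ := key_s19 beats k hspan
    have h1 : (m : ℝ) * k ≤ (n : ℝ) - 1 := by
      have : ((m * k : ℕ) : ℝ) ≤ ((n - 1 : ℕ) : ℝ) := by exact_mod_cast hmk
      rw [Nat.cast_mul, Nat.cast_sub hn1] at this
      simpa using this
    have h3 : (m : ℝ) < c / 2 * Real.log k := by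
      have hmx : (m : ℝ) * k < x := by linarith
      rw [hx] at hmx
      nlinarith
    have h4 : c * Real.log n < (m : ℝ) + 2 := by
      have : (domNumber beats : ℝ) ≤ (m : ℝ) + 2 := by exact_mod_cast hd
      linarith
    have h5 : Real.log k ≤ Real.log n := Real.log_le_log hkpos hkn
    have h6 : 4 ≤ c * Real.log n := by
      have h7 : 4 / c ≤ Real.log n := le_trans hlogk h5
      have := mul_le_mul_of_nonneg_left h7 hc.le
      calc (4 : ℝ) = c * (4 / c) := by field_simp
        _ ≤ c * Real.log n := this
    nlinarith
end
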